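/- arXiv:2003.03101 — 10 statements merged into one kernel-verified Lean document; each statement's English description precedes it below -/
import Mathlib

section
/- Let M ∈ ℂ^{m×m} and suppose S ∈ ℂ^{m×m} is invertible with S M S^{-1} = J, where J = diag(J_{s_1}(μ_1), ..., J_{s_q}(μ_q)) is a block-diagonal Jordan canonical form with Jordan blocks J_{s_l}(μ_l) of sizes s_l (s_1 + ... + s_q = m). If the pair (M, 𝟙_m^T) is observable, then there exists an invertible matrix S̃ ∈ ℂ^{m×m} with S̃ M S̃^{-1} = J and 𝟙_m^T S̃^{-1} = [e^{(1)}, ..., e^{(q)}], where e^{(l)} = (1, 0, ..., 0) ∈ ℂ^{1×s_l} for each l = 1, ..., q. -/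
open Matrix

/-- The `k×k` Jordan block with `μ` on the diagonal and `1` on the superdiagonal. -/
def jordanBlock (k : ℕ) (μ : ℂ) : Matrix (Fin k) (Fin k) ℂ :=
  Matrix.of fun i j => if j = i then μ else if (j : ℕ) = (i : ℕ) + 1 then 1 else 0

/-- Observability matrix of a pair `(M, c)`: its rows are `c, cM, cM², …`. -/
noncomputable def obsMatrix {ι : Type*} [Fintype ι] [DecidableEq ι]
    (M : Matrix ι ι ℂ) (c : ι → ℂ) :
    Matrix (Fin (Fintype.card ι)) (Fin (Fintype.card ι)) ℂ :=
  Matrix.of fun i j => (c ᵥ* M ^ (i : ℕ)) ((Fintype.equivFin ι).symm j)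

/-- The pair `(M, cᵀ)` (row vector `cᵀ`) is observable. -/
def Observable {ι : Type*} [Fintype ι] [DecidableEq ι]
    (M : Matrix ι ι ℂ) (c : ι → ℂ) : Prop :=
  IsUnit (obsMatrix M c)

def toep {k : ℕ} (a : Fin k → ℂ) : Matrix (Fin k) (Fin k) ℂ :=
  Matrix.of fun i j => if (i : ℕ) ≤ (j : ℕ) then
    a ⟨(j : ℕ) - (i : ℕ), Nat.lt_of_le_of_lt (Nat.sub_le _ _) j.isLt⟩ else 0

lemma sum_jordan_right {k : ℕ} (μ : ℂ) (f : Fin k → ℂ) (j : Fin k) :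
    ∑ x : Fin k, f x * jordanBlock k μ x j
      = f j * μ + (if h : 0 < (j : ℕ) then
          f ⟨(j : ℕ) - 1, Nat.lt_of_le_of_lt (Nat.sub_le _ _) j.isLt⟩ else 0) := by
  by_cases hj : 0 < (j : ℕ)
  · rw [dif_pos hj]
    set j' : Fin k := ⟨(j : ℕ) - 1, Nat.lt_of_le_of_lt (Nat.sub_le _ _) j.isLt⟩ with hj'
    have hne : j ≠ j' := by
      intro h; apply absurd (congrArg Fin.val h); simp [hj']; omega
    have key : ∀ x : Fin k, f x * jordanBlock k μ x j
        = (if x = j then f j * μ else 0) + (if x = j' then f j' else 0) := by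
      intro x
      simp only [jordanBlock, of_apply]
      rcases eq_or_ne x j with rfl | h1
      · rw [if_pos rfl, if_pos rfl, if_neg hne, add_zero]
      · rcases eq_or_ne x j' with rfl | h2
        · rw [if_neg (fun h => h1 h.symm),
            if_pos (show (j : ℕ) = (j' : ℕ) + 1 by simp [hj']; omega),
            if_neg h1, if_pos rfl, zero_add, mul_one]
        · rw [if_neg (fun h => h1 h.symm), if_neg
            (fun h => h2 (Fin.ext (by simp [hj']; omega))),
            mul_zero, if_neg h1, if_neg h2, add_zero]
    rw [Finset.sum_congr rfl (fun x _ => key x), Finset.sum_add_distrib,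
      Finset.sum_ite_eq' Finset.univ j (fun _ => f j * μ),
      Finset.sum_ite_eq' Finset.univ j' (fun _ => f j')]
    simp
  · rw [dif_neg hj, add_zero]
    have key : ∀ x : Fin k, f x * jordanBlock k μ x j
        = (if x = j then f j * μ else 0) := by
      intro x
      simp only [jordanBlock, of_apply]
      rcases eq_or_ne x j with rfl | h1
      · rw [if_pos rfl, if_pos rfl]
      · rw [if_neg (fun h => h1 h.symm), if_neg (by omega), mul_zero, if_neg h1]
    rw [Finset.sum_congr rfl (fun x _ => key x),
      Finset.sum_ite_eq' Finset.univ j (fun _ => f j * μ)]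
    simp

lemma sum_jordan_left {k : ℕ} (μ : ℂ) (g : Fin k → ℂ) (i : Fin k) :
    ∑ x : Fin k, jordanBlock k μ i x * g x
      = μ * g i + (if h : (i : ℕ) + 1 < k then g ⟨(i : ℕ) + 1, h⟩ else 0) := by
  by_cases hi : (i : ℕ) + 1 < k
  · rw [dif_pos hi]
    set i' : Fin k := ⟨(i : ℕ) + 1, hi⟩ with hi'
    have hne : i ≠ i' := by
      intro h; apply absurd (congrArg Fin.val h); simp [hi']
    have key : ∀ x : Fin k, jordanBlock k μ i x * g x
        = (if x = i then μ * g i else 0) + (if x = i' then g i' else 0) := by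
      intro x
      simp only [jordanBlock, of_apply]
      rcases eq_or_ne x i with rfl | h1
      · rw [if_pos rfl, if_pos rfl, if_neg hne, add_zero]
      · rcases eq_or_ne x i' with rfl | h2
        · rw [if_neg h1, if_pos (show (i' : ℕ) = (i : ℕ) + 1 by simp [hi']),
            if_neg h1, if_pos rfl, zero_add, one_mul]
        · rw [if_neg h1, if_neg
            (fun h => h2 (Fin.ext (by simp [hi']; omega))),
            zero_mul, if_neg h1, if_neg h2, add_zero]
    rw [Finset.sum_congr rfl (fun x _ => key x), Finset.sum_add_distrib,
      Finset.sum_ite_eq' Finset.univ i (fun _ => μ * g i),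
      Finset.sum_ite_eq' Finset.univ i' (fun _ => g i')]
    simp
  · rw [dif_neg hi, add_zero]
    have key : ∀ x : Fin k, jordanBlock k μ i x * g x
        = (if x = i then μ * g i else 0) := by
      intro x
      have hx := x.isLt
      simp only [jordanBlock, of_apply]
      rcases eq_or_ne x i with rfl | h1
      · rw [if_pos rfl, if_pos rfl]
      · rw [if_neg h1, if_neg (by omega), zero_mul, if_neg h1]
    rw [Finset.sum_congr rfl (fun x _ => key x),
      Finset.sum_ite_eq' Finset.univ i (fun _ => μ * g i)]
    simp

lemma toep_comm {k : ℕ} (μ : ℂ) (a : Fin k → ℂ) :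
    toep a * jordanBlock k μ = jordanBlock k μ * toep a := by
  ext i j
  rw [mul_apply, mul_apply, sum_jordan_right μ (fun x => toep a i x) j,
    sum_jordan_left μ (fun x => toep a x j) i]
  have hd : (if h : 0 < (j : ℕ) then
        toep a i ⟨(j : ℕ) - 1, Nat.lt_of_le_of_lt (Nat.sub_le _ _) j.isLt⟩ else 0)
      = (if h : (i : ℕ) + 1 < k then toep a ⟨(i : ℕ) + 1, h⟩ j else 0) := by
    have hik := i.isLt
    have hjk := j.isLt
    simp only [toep, of_apply]
    split_ifs <;> first
      | rfl
      | omega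
      | (congr 1; apply Fin.ext; simp; omega)
  rw [hd]; ring

lemma toep_isUnit {k : ℕ} (a : Fin k → ℂ) (ha : ∀ h : 0 < k, a ⟨0, h⟩ ≠ 0) :
    IsUnit (toep a) := by
  rw [Matrix.isUnit_iff_isUnit_det]
  have htri : (toep a).BlockTriangular id := by
    intro i j hij
    have h : (j : ℕ) < (i : ℕ) := hij
    simp only [toep, of_apply]
    rw [if_neg (Nat.not_le.mpr h)]
  rw [Matrix.det_of_upperTriangular htri, isUnit_iff_ne_zero]
  apply Finset.prod_ne_zero_iff.mpr
  intro i _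
  have : toep a i i = a ⟨0, i.pos⟩ := by
    simp only [toep, of_apply, if_pos le_rfl]
    congr 1
    apply Fin.ext
    simp
  rw [this]
  exact ha i.pos

/-- If `M` is similar via `S` to a Jordan canonical form `J` (block diagonal with
Jordan blocks `J_{s l}(μ l)`) and the pair `(M, 𝟙ᵀ)` is observable, then the
transformation to Jordan form can be chosen so that `𝟙ᵀ S̃⁻¹` consists of the
blocks `e₁ = (1, 0, …, 0)`. -/
theorem alpha_can_be_chosen_as_first_unit_vectors
    {q : ℕ} (s : Fin q → ℕ) (μ : Fin q → ℂ)
    (M S : Matrix ((l : Fin q) × Fin (s l)) ((l : Fin q) × Fin (s l)) ℂ)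
    (hS : IsUnit S)
    (hJ : S * M * S⁻¹ = Matrix.blockDiagonal' fun l => jordanBlock (s l) (μ l))
    (hobs : Observable M fun _ => (1 : ℂ)) :
    ∃ S' : Matrix ((l : Fin q) × Fin (s l)) ((l : Fin q) × Fin (s l)) ℂ,
      IsUnit S' ∧
      S' * M * S'⁻¹ = Matrix.blockDiagonal' (fun l => jordanBlock (s l) (μ l)) ∧
      ∀ li : (l : Fin q) × Fin (s l),
        ((fun _ => (1 : ℂ)) ᵥ* S'⁻¹) li = if (li.2 : ℕ) = 0 then 1 else 0 := by
  classical
  set J : Matrix ((l : Fin q) × Fin (s l)) ((l : Fin q) × Fin (s l)) ℂ :=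
    Matrix.blockDiagonal' (fun l => jordanBlock (s l) (μ l)) with hJdef
  set c : ((l : Fin q) × Fin (s l)) → ℂ := fun _ => (1 : ℂ) with hc
  have hSdet : IsUnit S.det := (Matrix.isUnit_iff_isUnit_det S).mp hS
  have hS1 : S⁻¹ * S = 1 := Matrix.nonsing_inv_mul S hSdet
  have hS2 : S * S⁻¹ = 1 := Matrix.mul_nonsing_inv S hSdet
  set α : ((l : Fin q) × Fin (s l)) → ℂ := c ᵥ* S⁻¹ with hα
  -- powers of J conjugate to powers of M
  have hpow : ∀ i : ℕ, J ^ i = S * M ^ i * S⁻¹ := by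
    intro i
    induction i with
    | zero => simp [hS2]
    | succ n ih =>
        rw [pow_succ, pow_succ, ih, ← hJ]
        have h2 : S * M ^ n * S⁻¹ * (S * M * S⁻¹) = S * M ^ n * (S⁻¹ * S) * (M * S⁻¹) := by
          simp only [Matrix.mul_assoc]
        rw [h2, hS1, Matrix.mul_one]
        simp only [Matrix.mul_assoc]
  have hcM : ∀ i : ℕ, (c ᵥ* M ^ i) = (α ᵥ* J ^ i) ᵥ* S := by
    intro i
    rw [hα, Matrix.vecMul_vecMul, Matrix.vecMul_vecMul, hpow i]
    have key : S⁻¹ * (S * M ^ i * S⁻¹ * S) = M ^ i := by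
      simp only [Matrix.mul_assoc]
      rw [hS1, Matrix.mul_one, ← Matrix.mul_assoc, hS1, Matrix.one_mul]
    rw [key]
  -- the leading coefficient of each Jordan block of α is nonzero
  have hα0 : ∀ (l : Fin q) (h0 : 0 < s l), α ⟨l, ⟨0, h0⟩⟩ ≠ 0 := by
    intro l h0 hcontra
    set p : (l : Fin q) × Fin (s l) := ⟨l, ⟨0, h0⟩⟩ with hp
    -- (β ᵥ* J) p = β p * μ l for any β
    have hstep : ∀ β : ((l : Fin q) × Fin (s l)) → ℂ, (β ᵥ* J) p = β p * μ l := by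
      intro β
      show ∑ x, β x * J x p = β p * μ l
      rw [Finset.sum_eq_single_of_mem p (Finset.mem_univ p)]
      · have : J p p = μ l := by
          rw [hJdef, hp]
          rw [Matrix.blockDiagonal'_apply_eq]
          simp [jordanBlock]
        rw [this]
      · rintro ⟨l', i'⟩ _ hne
        rcases eq_or_ne l' l with rfl | hl
        · have hi' : i' ≠ ⟨0, h0⟩ := by
            intro h; exact hne (by rw [hp, h])
          have : J ⟨l', i'⟩ p = 0 := by
            rw [hJdef, hp, Matrix.blockDiagonal'_apply_eq]
            simp only [jordanBlock, Matrix.of_apply]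
            rw [if_neg (fun h => hi' h.symm), if_neg (by omega)]
          rw [this, mul_zero]
        · rw [hJdef, hp, Matrix.blockDiagonal'_apply_ne _ _ _ hl, mul_zero]
    have hαJ : ∀ i : ℕ, (α ᵥ* J ^ i) p = α p * μ l ^ i := by
      intro i
      induction i with
      | zero => simp
      | succ n ih =>
          rw [pow_succ, ← Matrix.vecMul_vecMul, hstep, ih, pow_succ, mul_assoc]
    set u : ((l : Fin q) × Fin (s l)) → ℂ := Pi.single p 1 with hu
    set w : ((l : Fin q) × Fin (s l)) → ℂ := S⁻¹ *ᵥ u with hw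
    have hdotw : ∀ i : ℕ, (c ᵥ* M ^ i) ⬝ᵥ w = 0 := by
      intro i
      rw [hcM i, hw, Matrix.dotProduct_mulVec, Matrix.vecMul_vecMul, hS2,
        Matrix.vecMul_one, hu]
      rw [dotProduct_single, hαJ i, hp] at *
      rw [hcontra, zero_mul, mul_one]
    -- build a kernel vector of the observability matrix
    set σ := Fintype.equivFin ((l : Fin q) × Fin (s l)) with hσ
    set v : Fin (Fintype.card ((l : Fin q) × Fin (s l))) → ℂ := fun i => w (σ.symm i) with hv
    have hOv : obsMatrix M c *ᵥ v = 0 := by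
      funext i
      show ∑ j, obsMatrix M c i j * v j = 0
      have : ∀ j, obsMatrix M c i j * v j = (fun x => (c ᵥ* M ^ (i : ℕ)) x * w x) (σ.symm j) :=
        fun j => rfl
      rw [Finset.sum_congr rfl (fun j _ => this j)]
      rw [Equiv.sum_comp σ.symm (fun x => (c ᵥ* M ^ (i : ℕ)) x * w x)]
      exact hdotw (i : ℕ)
    have hOdet : IsUnit (obsMatrix M c).det := (Matrix.isUnit_iff_isUnit_det _).mp hobs
    have hv0 : v = 0 := by
      have := congrArg (fun z => (obsMatrix M c)⁻¹ *ᵥ z) hOv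
      simpa [Matrix.mulVec_mulVec, Matrix.nonsing_inv_mul _ hOdet] using this
    have hw0 : w = 0 := by
      funext x
      have hx := congrFun hv0 (σ x)
      simpa [hv] using hx
    have : u = 0 := by
      have : S *ᵥ w = u := by rw [hw, Matrix.mulVec_mulVec, hS2, Matrix.one_mulVec]
      rw [hw0, Matrix.mulVec_zero] at this
      exact this.symm
    have : (0 : ℂ) = 1 := by
      have h1 := congrFun this p
      rw [hu] at h1
      simpa using h1.symm
    exact absurd this (by norm_num)
  -- construct the block-diagonal Toeplitz transformation
  set a : (l : Fin q) → Fin (s l) → ℂ := fun l i => α ⟨l, i⟩ with ha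
  set Tl : (l : Fin q) → Matrix (Fin (s l)) (Fin (s l)) ℂ := fun l => toep (a l) with hTl
  set T := Matrix.blockDiagonal' Tl with hT
  have hTlU : ∀ l, IsUnit (Tl l) := fun l => toep_isUnit (a l) (fun h => hα0 l h)
  have hTU : IsUnit T := by
    refine (Matrix.isUnit_iff_isUnit_det _).mpr (Matrix.isUnit_det_of_right_inverse (B := Matrix.blockDiagonal' fun l => (Tl l)⁻¹) ?_)
    rw [hT, ← Matrix.blockDiagonal'_mul]
    have h1 : (fun l => Tl l * (Tl l)⁻¹)
        = fun l => (1 : Matrix (Fin (s l)) (Fin (s l)) ℂ) := by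
      funext l
      exact Matrix.mul_nonsing_inv _ ((Matrix.isUnit_iff_isUnit_det _).mp (hTlU l))
    rw [h1]
    exact Matrix.blockDiagonal'_one
  have hTdet : IsUnit T.det := (Matrix.isUnit_iff_isUnit_det T).mp hTU
  have hTJ : T * J = J * T := by
    rw [hT, hJdef, ← Matrix.blockDiagonal'_mul, ← Matrix.blockDiagonal'_mul]
    exact congrArg _ (funext fun l => toep_comm (μ l) (a l))
  have heT : (fun li : (l : Fin q) × Fin (s l) =>
      if (li.2 : ℕ) = 0 then (1 : ℂ) else 0) ᵥ* T = α := by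
    funext li
    obtain ⟨l, j⟩ := li
    show ∑ x, _ * T x ⟨l, j⟩ = α ⟨l, j⟩
    rw [Finset.sum_eq_single_of_mem ⟨l, ⟨0, j.pos⟩⟩ (Finset.mem_univ _)]
    · have h1 : T ⟨l, ⟨0, j.pos⟩⟩ ⟨l, j⟩ = α ⟨l, j⟩ := by
        rw [hT, Matrix.blockDiagonal'_apply_eq, hTl]
        simp only [toep, Matrix.of_apply, if_pos (Nat.zero_le _), ha]
        exact congrArg α (congrArg (Sigma.mk l) (Fin.ext (Nat.sub_zero _)))
      rw [if_pos rfl, one_mul, h1]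
    · rintro ⟨l', i'⟩ _ hne
      rcases eq_or_ne l' l with rfl | hl
      · have hz : (i' : ℕ) ≠ 0 := fun h => hne (congrArg (Sigma.mk l') (Fin.ext h))
        rw [if_neg hz, zero_mul]
      · rw [hT, Matrix.blockDiagonal'_apply_ne _ _ _ hl, mul_zero]
  refine ⟨T * S, hTU.mul hS, ?_, ?_⟩
  · rw [Matrix.mul_inv_rev]
    calc T * S * M * (S⁻¹ * T⁻¹) = T * (S * M * S⁻¹) * T⁻¹ := by
          simp only [Matrix.mul_assoc]
      _ = J * T * T⁻¹ := by rw [hJ, hTJ]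
      _ = J := by rw [Matrix.mul_assoc, Matrix.mul_nonsing_inv _ hTdet, Matrix.mul_one]
  · have hfinal : c ᵥ* (T * S)⁻¹ = fun li : (l : Fin q) × Fin (s l) =>
        if (li.2 : ℕ) = 0 then (1 : ℂ) else 0 := by
      rw [Matrix.mul_inv_rev, ← Matrix.vecMul_vecMul, ← hα, ← heT,
        Matrix.vecMul_vecMul, Matrix.mul_nonsing_inv _ hTdet, Matrix.vecMul_one]
    intro li
    rw [hfinal]
end

section
/- Let A ∈ ℝ^{n×n}, h_0 ∈ ℝ^n, and let μ ∈ ℂ with μ ≠ 0 and I_n − μA invertible. Let J = J_k(μ) ∈ ℂ^{k×k} be a Jordan block, and suppose H ∈ ℂ^{n×k} satisfies H = h_0 e_1 + A H J, where h_0 e_1 ∈ ℂ^{n×k} is the matrix whose first column is h_0 and whose remaining columns are zero. Then the span of the columns of H equals span{ (I_n − μA)^{-i} h_0 : i = 1, ..., k }. -/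
open Matrix

/-- If `H = h₀e₁ + AHJ_k(μ)` with `μ ≠ 0` and `I − μA` invertible, then the columns
of `H` span the rational Krylov space `span{(I − μA)⁻ⁱ h₀ : i = 1, …, k}`. -/
theorem span_of_jordan_sylvester_block_nonzero
    {n k : ℕ} (A : Matrix (Fin n) (Fin n) ℝ) (h₀ : Fin n → ℝ) (μ : ℂ)
    (hμ : μ ≠ 0)
    (hinv : IsUnit (1 - μ • A.map (Complex.ofReal : ℝ → ℂ)))
    (H : Matrix (Fin n) (Fin k) ℂ)
    (hH : H = (Matrix.of fun i (j : Fin k) => if (j : ℕ) = 0 then (h₀ i : ℂ) else 0) +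
        A.map (Complex.ofReal : ℝ → ℂ) * H * jordanBlock k μ) :
    Submodule.span ℂ (Set.range Hᵀ) =
      Submodule.span ℂ (Set.range fun i : Fin k =>
        ((1 - μ • A.map (Complex.ofReal : ℝ → ℂ))⁻¹ ^ ((i : ℕ) + 1)) *ᵥ
          fun r => (h₀ r : ℂ)) := by
  set B := A.map (Complex.ofReal : ℝ → ℂ) with hBdef
  set M := (1 : Matrix (Fin n) (Fin n) ℂ) - μ • B with hMdef
  have hdet : IsUnit M.det := (Matrix.isUnit_iff_isUnit_det M).mp hinv
  set c : Fin k → Fin n → ℂ := fun j r => H r j with hcdef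
  set h0 : Fin n → ℂ := fun r => (h₀ r : ℂ) with h0def
  set g : Fin k → Fin n → ℂ := fun i => (M⁻¹ ^ ((i : ℕ) + 1)) *ᵥ h0 with hgdef
  have hMinv : ∀ v : Fin n → ℂ, M⁻¹ *ᵥ (M *ᵥ v) = v := by
    intro v
    rw [Matrix.mulVec_mulVec, Matrix.nonsing_inv_mul M hdet, Matrix.one_mulVec]
  -- column equations
  have hcol : ∀ j : Fin k, c j = (fun r => if (j : ℕ) = 0 then h0 r else 0)
      + B *ᵥ (fun i => (H * jordanBlock k μ) i j) := by
    intro j; funext r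
    have h1 := congrFun (congrFun hH r) j
    rw [Matrix.mul_assoc] at h1
    simpa [hcdef, Matrix.mul_apply, Matrix.mulVec, dotProduct, Matrix.add_apply] using h1
  -- columns of H * J
  have hHJ0 : ∀ (h0k : 0 < k) (i : Fin n),
      (H * jordanBlock k μ) i ⟨0, h0k⟩ = μ * H i ⟨0, h0k⟩ := by
    intro h0k i
    rw [Matrix.mul_apply]
    rw [Finset.sum_eq_single (⟨0, h0k⟩ : Fin k)]
    · simp [jordanBlock, mul_comm]
    · intro l _ hl
      have : (⟨0, h0k⟩ : Fin k) ≠ l := fun h => hl h.symm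
      simp [jordanBlock, this]
    · simp
  have hHJs : ∀ (m : ℕ) (hm : m + 1 < k) (i : Fin n),
      (H * jordanBlock k μ) i ⟨m + 1, hm⟩ =
        μ * H i ⟨m + 1, hm⟩ + H i ⟨m, Nat.lt_of_succ_lt hm⟩ := by
    intro m hm i
    rw [Matrix.mul_apply]
    have hsplit : ∀ l : Fin k, H i l * jordanBlock k μ l ⟨m + 1, hm⟩ =
        (if (⟨m + 1, hm⟩ : Fin k) = l then μ * H i l else 0) +
        (if (⟨m, Nat.lt_of_succ_lt hm⟩ : Fin k) = l then H i l else 0) := by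
      intro l
      by_cases h1 : (⟨m + 1, hm⟩ : Fin k) = l
      · rcases h1 with rfl
        simp [jordanBlock, Fin.ext_iff, mul_comm]
      · by_cases h2 : (⟨m, Nat.lt_of_succ_lt hm⟩ : Fin k) = l
        · rcases h2 with rfl
          simp [jordanBlock, Fin.ext_iff] at h1 ⊢
        · have hv : (m + 1 : ℕ) ≠ (l : ℕ) + 1 := fun h =>
            h2 (Fin.ext (by simpa using Nat.succ_injective h))
          simp [jordanBlock, h1, h2, hv]
          exact fun h => absurd (Fin.ext h) h2
    rw [Finset.sum_congr rfl (fun l _ => hsplit l), Finset.sum_add_distrib]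
    simp
  -- key relations
  have key0 : ∀ h0k : 0 < k, M *ᵥ c ⟨0, h0k⟩ = h0 := by
    intro h0k
    have h1 := hcol ⟨0, h0k⟩
    have h2 : (fun i => (H * jordanBlock k μ) i ⟨0, h0k⟩) = μ • c ⟨0, h0k⟩ := by
      funext i; simp [hHJ0 h0k i, hcdef]
    rw [h2, Matrix.mulVec_smul] at h1
    have h1' : c ⟨0, h0k⟩ = h0 + μ • (B *ᵥ c ⟨0, h0k⟩) := by
      conv_lhs => rw [h1]
      funext r; simp
    rw [hMdef, Matrix.sub_mulVec, Matrix.one_mulVec, Matrix.smul_mulVec]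
    exact sub_eq_of_eq_add h1'
  have keys : ∀ (m : ℕ) (hm : m + 1 < k),
      M *ᵥ c ⟨m + 1, hm⟩ = B *ᵥ c ⟨m, Nat.lt_of_succ_lt hm⟩ := by
    intro m hm
    have h1 := hcol ⟨m + 1, hm⟩
    have h2 : (fun i => (H * jordanBlock k μ) i ⟨m+1, hm⟩) =
        μ • c ⟨m+1, hm⟩ + c ⟨m, Nat.lt_of_succ_lt hm⟩ := by
      funext i; simp [hHJs m hm i, hcdef]
    rw [h2, Matrix.mulVec_add, Matrix.mulVec_smul] at h1
    have h1' : c ⟨m + 1, hm⟩ = μ • (B *ᵥ c ⟨m + 1, hm⟩) +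
        B *ᵥ c ⟨m, Nat.lt_of_succ_lt hm⟩ := by
      conv_lhs => rw [h1]
      funext r; simp
    rw [hMdef, Matrix.sub_mulVec, Matrix.one_mulVec, Matrix.smul_mulVec]
    exact sub_eq_of_eq_add' h1'
  have rel : ∀ (m : ℕ) (hm : m + 1 < k),
      M⁻¹ *ᵥ c ⟨m, Nat.lt_of_succ_lt hm⟩ =
        μ • c ⟨m + 1, hm⟩ + c ⟨m, Nat.lt_of_succ_lt hm⟩ := by
    intro m hm
    have h1 : M *ᵥ (μ • c ⟨m + 1, hm⟩ + c ⟨m, Nat.lt_of_succ_lt hm⟩) =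
        c ⟨m, Nat.lt_of_succ_lt hm⟩ := by
      rw [Matrix.mulVec_add, Matrix.mulVec_smul, keys m hm]
      rw [hMdef, Matrix.sub_mulVec, Matrix.one_mulVec, Matrix.smul_mulVec]
      abel
    calc M⁻¹ *ᵥ c ⟨m, Nat.lt_of_succ_lt hm⟩
        = M⁻¹ *ᵥ (M *ᵥ (μ • c ⟨m + 1, hm⟩ + c ⟨m, Nat.lt_of_succ_lt hm⟩)) := by rw [h1]
      _ = _ := hMinv _
  have hc0 : ∀ h0k : 0 < k, c ⟨0, h0k⟩ = g ⟨0, h0k⟩ := by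
    intro h0k
    rw [hgdef]
    show c ⟨0, h0k⟩ = (M⁻¹ ^ (0 + 1)) *ᵥ h0
    rw [zero_add, pow_one, ← key0 h0k, hMinv]
  have hgsucc : ∀ (m : ℕ) (hm : m + 1 < k),
      g ⟨m + 1, hm⟩ = M⁻¹ *ᵥ g ⟨m, Nat.lt_of_succ_lt hm⟩ := by
    intro m hm
    show (M⁻¹ ^ (m + 1 + 1)) *ᵥ h0 = M⁻¹ *ᵥ ((M⁻¹ ^ (m + 1)) *ᵥ h0)
    rw [Matrix.mulVec_mulVec, ← pow_succ']
  -- forward inclusion: columns of H in span of g's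
  have P1 : ∀ (m : ℕ) (hm : m < k), c ⟨m, hm⟩ ∈
      Submodule.span ℂ (g '' {i : Fin k | (i : ℕ) ≤ m}) := by
    intro m
    induction m with
    | zero =>
      intro hm
      rw [hc0 hm]
      exact Submodule.subset_span ⟨⟨0, hm⟩, by simp, rfl⟩
    | succ m ih =>
      intro hm
      have hmk : m < k := Nat.lt_of_succ_lt hm
      have h1 : c ⟨m + 1, hm⟩ = μ⁻¹ • (M⁻¹ *ᵥ c ⟨m, hmk⟩ - c ⟨m, hmk⟩) := by
        rw [rel m hm, add_sub_cancel_right, smul_smul, inv_mul_cancel₀ hμ, one_smul]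
      rw [h1]
      have hmono : Submodule.span ℂ (g '' {i : Fin k | (i : ℕ) ≤ m}) ≤
          Submodule.span ℂ (g '' {i : Fin k | (i : ℕ) ≤ m + 1}) :=
        Submodule.span_mono (Set.image_mono fun i hi => le_trans hi (Nat.le_succ m))
      have hmem1 : c ⟨m, hmk⟩ ∈ Submodule.span ℂ (g '' {i : Fin k | (i : ℕ) ≤ m + 1}) :=
        hmono (ih hmk)
      have hmem2 : M⁻¹ *ᵥ c ⟨m, hmk⟩ ∈
          Submodule.span ℂ (g '' {i : Fin k | (i : ℕ) ≤ m + 1}) := by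
        have hmap : M⁻¹ *ᵥ c ⟨m, hmk⟩ ∈
            Submodule.map (Matrix.mulVecLin M⁻¹)
              (Submodule.span ℂ (g '' {i : Fin k | (i : ℕ) ≤ m})) :=
          ⟨c ⟨m, hmk⟩, ih hmk, rfl⟩
        rw [Submodule.map_span] at hmap
        refine Submodule.span_le.mpr ?_ hmap
        rintro _ ⟨_, ⟨i, hi, rfl⟩, rfl⟩
        have hik : (i : ℕ) + 1 < k := Nat.lt_of_le_of_lt (Nat.succ_le_succ hi) hm
        have : Matrix.mulVecLin M⁻¹ (g i) = g ⟨(i : ℕ) + 1, hik⟩ :=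
          (hgsucc (i : ℕ) hik).symm
        rw [this]
        exact Submodule.subset_span ⟨⟨(i : ℕ) + 1, hik⟩, Nat.succ_le_succ hi, rfl⟩
      exact Submodule.smul_mem _ _ (Submodule.sub_mem _ hmem2 hmem1)
  -- backward inclusion: g's in span of columns of H
  have P2 : ∀ (m : ℕ) (hm : m < k), g ⟨m, hm⟩ ∈
      Submodule.span ℂ (c '' {i : Fin k | (i : ℕ) ≤ m}) := by
    intro m
    induction m with
    | zero =>
      intro hm
      rw [← hc0 hm]
      exact Submodule.subset_span ⟨⟨0, hm⟩, by simp, rfl⟩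
    | succ m ih =>
      intro hm
      have hmk : m < k := Nat.lt_of_succ_lt hm
      rw [hgsucc m hm]
      have hmap : M⁻¹ *ᵥ g ⟨m, hmk⟩ ∈
          Submodule.map (Matrix.mulVecLin M⁻¹)
            (Submodule.span ℂ (c '' {i : Fin k | (i : ℕ) ≤ m})) :=
        ⟨g ⟨m, hmk⟩, ih hmk, rfl⟩
      rw [Submodule.map_span] at hmap
      refine Submodule.span_le.mpr ?_ hmap
      rintro _ ⟨_, ⟨i, hi, rfl⟩, rfl⟩
      have hik : (i : ℕ) + 1 < k := Nat.lt_of_le_of_lt (Nat.succ_le_succ hi) hm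
      have hrel : Matrix.mulVecLin M⁻¹ (c i) =
          μ • c ⟨(i : ℕ) + 1, hik⟩ + c ⟨(i : ℕ), Nat.lt_of_succ_lt hik⟩ :=
        rel (i : ℕ) hik
      rw [hrel]
      refine Submodule.add_mem _ (Submodule.smul_mem _ _ ?_) ?_
      · exact Submodule.subset_span ⟨⟨(i : ℕ) + 1, hik⟩, Nat.succ_le_succ hi, rfl⟩
      · exact Submodule.subset_span ⟨⟨(i : ℕ), Nat.lt_of_succ_lt hik⟩,
          le_trans (le_refl _) (le_trans hi (Nat.le_succ m)), rfl⟩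
  -- conclude
  have hrange : Set.range Hᵀ = Set.range c := rfl
  rw [hrange]
  apply le_antisymm
  · rw [Submodule.span_le]
    rintro _ ⟨j, rfl⟩
    have := P1 (j : ℕ) j.2
    rw [Fin.eta] at this
    exact Submodule.span_mono (Set.image_subset_range _ _) this
  · rw [Submodule.span_le]
    rintro _ ⟨j, rfl⟩
    have := P2 (j : ℕ) j.2
    rw [Fin.eta] at this
    exact Submodule.span_mono (Set.image_subset_range _ _) this
end

section
/- Let A ∈ ℝ^{n×n}, B ∈ ℝ^{n×1}, C ∈ ℝ^{1×n}, and let m < n. Let Λ̂_c ∈ ℂ^{m×m} be such that (Λ̂_c^T, 𝟙_m^T) is observable, with distinct nonzero eigenvalues μ_1, ..., μ_{q_c} of algebraic multiplicities s_1, ..., s_{q_c}, and assume I_n − μ_l A is invertible for each l. Let Ĥ_c ∈ ℂ^{n×m} satisfy Ĥ_c = B 𝟙_m^T + A Ĥ_c Λ̂_c^T and set Z_c = Ĥ_c D_c for an invertible diagonal D_c ∈ ℂ^{m×m}. Analogously, let Λ̂_o ∈ ℂ^{m×m} with (Λ̂_o^T, 𝟙_m^T) observable, distinct nonzero eigenvalues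 ν_1, ..., ν_{q_o} of multiplicities t_1, ..., t_{q_o}, with I_n − ν_l A^T invertible for each l; let Ĥ_o ∈ ℂ^{n×m} satisfy Ĥ_o = C^T 𝟙_m^T + A^T Ĥ_o Λ̂_o^T and set Z_o = Ĥ_o D_o with D_o invertible diagonal. Suppose Z_o^H Z_c ∈ ℂ^{m×m} is invertible with singular value decomposition Z_o^H Z_c = U Σ T^H (U, T ∈ ℂ^{m×m} unitary, Σ diagonal with positive entries), and define V = Z_c T Σ^{-1/2}, W = Z_o U Σ^{-1/2}, Â = W^H A V, B̂ = W^H B, Ĉ = C V. Assume additionally that Â − μ_l^{-1} I_m is invertible for l = 1, ..., q_c and Â − conj(ν_l)^{-1} I_m is invertible for l = 1, ..., q_o. Then for each l = 1, ..., q_c and j = 0, ..., s_l − 1 it holds C (A − μ_l^{-1} I_n)^{-(j+1)} B = Ĉ (Â − μ_l^{-1} I_m)^{-(j+1)} B̂, and for each l = 1, ..., q_o and j = 0, ..., t_l − 1 it holds C (A − conj(ν_l)^{-1} I_n)^{-(j+1)} B = Ĉ (Â − conj(ν_l)^{-1} I_m)^{-(j+1)} B̂. -/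
open Matrix Polynomial

lemma charpoly_transpose'' {k : ℕ} (M : Matrix (Fin k) (Fin k) ℂ) : Mᵀ.charpoly = M.charpoly := by
  unfold Matrix.charpoly
  have h : charmatrix Mᵀ = (charmatrix M)ᵀ := by
    apply Matrix.ext
    intro i j
    by_cases h : i = j
    · subst h; simp
    · rw [Matrix.transpose_apply, Matrix.charmatrix_apply_ne (h := h),
        Matrix.charmatrix_apply_ne (h := Ne.symm h), Matrix.transpose_apply]
  rw [h, Matrix.det_transpose]

lemma isUnit_smul_mat {k : ℕ} {c : ℂ} (hc : c ≠ 0) {M : Matrix (Fin k) (Fin k) ℂ}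
    (h : IsUnit M) : IsUnit (c • M) := by
  rw [Matrix.isUnit_iff_isUnit_det, Matrix.det_smul]
  exact (isUnit_iff_ne_zero.2 (pow_ne_zero _ hc)).mul ((Matrix.isUnit_iff_isUnit_det M).1 h)

lemma inv_smul_mat {k : ℕ} {c : ℂ} (hc : c ≠ 0) {M : Matrix (Fin k) (Fin k) ℂ}
    (h : IsUnit M) : (c • M)⁻¹ = c⁻¹ • M⁻¹ := by
  apply Matrix.inv_eq_right_inv
  rw [Matrix.smul_mul, Matrix.mul_smul, smul_smul, mul_inv_cancel₀ hc, one_smul,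
    Matrix.mul_nonsing_inv _ ((Matrix.isUnit_iff_isUnit_det M).1 h)]

lemma shift_eq {k : ℕ} {c : ℂ} (hc : c ≠ 0) (M : Matrix (Fin k) (Fin k) ℂ) :
    M - c⁻¹ • (1 : Matrix (Fin k) (Fin k) ℂ) = (-c⁻¹) • (1 - c • M) := by
  rw [smul_sub, smul_smul, neg_mul, inv_mul_cancel₀ hc, neg_smul, neg_smul, one_smul,
    sub_neg_eq_add]
  abel

lemma moment_match {n m : ℕ} (A : Matrix (Fin n) (Fin n) ℂ)
    (V W : Matrix (Fin n) (Fin m) ℂ)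
    (b : Matrix (Fin n) (Fin 1) ℂ) (Cm : Matrix (Fin 1) (Fin n) ℂ) (σ0 : ℂ)
    (hWV : Wᴴ * V = 1) (hA : IsUnit (A - σ0 • 1)) (hAr : IsUnit (Wᴴ * A * V - σ0 • 1))
    (J : ℕ)
    (hmem : ∀ i, i ≤ J → ∃ y : Matrix (Fin m) (Fin 1) ℂ,
      V * y = ((A - σ0 • 1)⁻¹) ^ (i + 1) * b) :
    Cm * ((A - σ0 • 1)⁻¹) ^ (J + 1) * b
      = (Cm * V) * ((Wᴴ * A * V - σ0 • 1)⁻¹) ^ (J + 1) * (Wᴴ * b) := by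
  set E := (A - σ0 • 1)⁻¹ with hE
  set Ar := Wᴴ * A * V with hArdef
  set F := (Ar - σ0 • 1)⁻¹ with hF
  have hAdet := (Matrix.isUnit_iff_isUnit_det _).1 hA
  have hArdet := (Matrix.isUnit_iff_isUnit_det _).1 hAr
  have hproj : ∀ i, i ≤ J → V * (Wᴴ * (E ^ (i + 1) * b)) = E ^ (i + 1) * b := by
    intro i hi
    obtain ⟨y, hy⟩ := hmem i hi
    rw [← hy, ← Matrix.mul_assoc Wᴴ V y, hWV, Matrix.one_mul]
  have key : ∀ i, i ≤ J + 1 → Wᴴ * (E ^ i * b) = F ^ i * (Wᴴ * b) := by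
    intro i
    induction i with
    | zero => intro _; simp [Matrix.mul_assoc]
    | succ i ih =>
      intro hi
      have hi' : i ≤ J := Nat.lt_succ_iff.mp hi
      have h2 : (A - σ0 • 1) * (E ^ (i + 1) * b) = E ^ i * b := by
        rw [pow_succ' E i, ← Matrix.mul_assoc, ← Matrix.mul_assoc,
          Matrix.mul_nonsing_inv _ hAdet, Matrix.one_mul]
      have h1 : (Ar - σ0 • 1) * (Wᴴ * (E ^ (i + 1) * b)) = Wᴴ * (E ^ i * b) := by
        calc (Ar - σ0 • 1) * (Wᴴ * (E ^ (i + 1) * b))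
            = Wᴴ * A * (V * (Wᴴ * (E ^ (i + 1) * b))) - σ0 • (Wᴴ * (E ^ (i + 1) * b)) := by
              rw [Matrix.sub_mul, Matrix.smul_mul, Matrix.one_mul, hArdef, Matrix.mul_assoc]
          _ = Wᴴ * (A * (E ^ (i + 1) * b)) - Wᴴ * (σ0 • (E ^ (i + 1) * b)) := by
              rw [hproj i hi', Matrix.mul_assoc, Matrix.mul_smul]
          _ = Wᴴ * ((A - σ0 • 1) * (E ^ (i + 1) * b)) := by
              rw [← Matrix.mul_sub, Matrix.sub_mul, Matrix.smul_mul, Matrix.one_mul]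
          _ = Wᴴ * (E ^ i * b) := by rw [h2]
      have h3 := congrArg (fun X => F * X) h1
      rw [← Matrix.mul_assoc, Matrix.nonsing_inv_mul _ hArdet, Matrix.one_mul] at h3
      rw [h3, ih hi'.step, pow_succ' F i, Matrix.mul_assoc]
  calc Cm * E ^ (J + 1) * b = Cm * (E ^ (J + 1) * b) := by rw [Matrix.mul_assoc]
    _ = Cm * (V * (Wᴴ * (E ^ (J + 1) * b))) := by rw [hproj J le_rfl]
    _ = Cm * (V * (F ^ (J + 1) * (Wᴴ * b))) := by rw [key (J + 1) le_rfl]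
    _ = (Cm * V) * F ^ (J + 1) * (Wᴴ * b) := by simp only [Matrix.mul_assoc]

lemma one_by_one_smul {n : ℕ} (b : Matrix (Fin n) (Fin 1) ℂ)
    (c : Matrix (Fin 1) (Fin 1) ℂ) : b * c = (c 0 0) • b := by
  ext i j
  rw [Matrix.mul_apply, Fin.sum_univ_one, Matrix.smul_apply]
  have hj : j = 0 := Subsingleton.elim _ _
  subst hj
  rw [smul_eq_mul, mul_comm]

lemma krylov_mem {n m : ℕ}
    (A : Matrix (Fin n) (Fin n) ℂ) (H : Matrix (Fin n) (Fin m) ℂ)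
    (b : Matrix (Fin n) (Fin 1) ℂ) (M : Matrix (Fin m) (Fin m) ℂ)
    {q : ℕ} (μ : Fin q → ℂ) (s : Fin q → ℕ)
    (hchar : M.charpoly = ∏ l : Fin q, (X - Polynomial.C (μ l)) ^ (s l))
    (hobs : Observable M (fun _ => (1 : ℂ)))
    (hH : H = b * (Matrix.of fun _ _ => (1 : ℂ) : Matrix (Fin 1) (Fin m) ℂ) + A * H * M)
    (l : Fin q) (hK : IsUnit (1 - μ l • A))
    (k : ℕ) (hk : k < s l) :
    ∃ y : Matrix (Fin m) (Fin 1) ℂ, H * y = ((1 - μ l • A)⁻¹) ^ (k + 1) * b := by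
  classical
  set ones : Matrix (Fin 1) (Fin m) ℂ := Matrix.of fun _ _ => (1 : ℂ) with hones
  set K : Matrix (Fin n) (Fin n) ℂ := (1 - μ l • A)⁻¹ with hKdef
  set N : Matrix (Fin m) (Fin m) ℂ := M - μ l • 1 with hNdef
  have hKdet : IsUnit (1 - μ l • A).det := (Matrix.isUnit_iff_isUnit_det _).1 hK
  have hK1 : K * (1 - μ l • A) = 1 := Matrix.nonsing_inv_mul _ hKdet
  -- base identity
  have base : ∀ u : Matrix (Fin m) (Fin 1) ℂ,
      H * u = ((ones * u) 0 0) • (K * b) + (K * A) * (H * (N * u)) := by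
    intro u
    have hHu : H * u = b * (ones * u) + A * (H * (M * u)) := by
      conv_lhs => rw [hH]
      rw [Matrix.add_mul]
      simp only [Matrix.mul_assoc]
    have hMu : M * u = N * u + μ l • u := by
      rw [hNdef, Matrix.sub_mul, Matrix.smul_mul, Matrix.one_mul, sub_add_cancel]
    have e2 : H * u = b * (ones * u) + (A * (H * (N * u)) + μ l • (A * (H * u))) := by
      conv_lhs => rw [hHu, hMu]
      rw [Matrix.mul_add, Matrix.mul_add, Matrix.mul_smul, Matrix.mul_smul]
    have e1 : (1 - μ l • A) * (H * u) = ((ones * u) 0 0) • b + A * (H * (N * u)) := by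
      calc (1 - μ l • A) * (H * u) = H * u - μ l • (A * (H * u)) := by
            rw [Matrix.sub_mul, Matrix.one_mul, Matrix.smul_mul]
        _ = b * (ones * u) + A * (H * (N * u)) := by
            rw [sub_eq_iff_eq_add]
            conv_lhs => rw [e2]
            abel
        _ = ((ones * u) 0 0) • b + A * (H * (N * u)) := by rw [one_by_one_smul]
    have e3 := congrArg (fun X => K * X) e1
    rw [← Matrix.mul_assoc, hK1, Matrix.one_mul] at e3
    rw [e3, Matrix.mul_add, Matrix.mul_smul, ← Matrix.mul_assoc]
  -- iterated identity
  have iter : ∀ (r : ℕ) (u : Matrix (Fin m) (Fin 1) ℂ),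
      H * u = (∑ j ∈ Finset.range r, ((ones * (N ^ j * u)) 0 0) • ((K * A) ^ j * (K * b)))
        + (K * A) ^ r * (H * (N ^ r * u)) := by
    intro r
    induction r with
    | zero => intro u; simp
    | succ r ih =>
      intro u
      rw [ih u, Finset.sum_range_succ, base (N ^ r * u), Matrix.mul_add, Matrix.mul_smul,
        ← Matrix.mul_assoc ((K * A) ^ r) (K * A), ← pow_succ, ← Matrix.mul_assoc N, ← pow_succ']
      abel
  -- spectral / polynomial data
  set S := s l with hS
  set g : Polynomial ℂ := ∏ l' ∈ Finset.univ.erase l, (X - Polynomial.C (μ l')) ^ (s l') with hg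
  have hfact : M.charpoly = (X - Polynomial.C (μ l)) ^ S * g := by
    rw [hchar, hg, ← Finset.mul_prod_erase Finset.univ _ (Finset.mem_univ l)]
  have hXm : ((X : Polynomial ℂ) - Polynomial.C (μ l)).Monic := Polynomial.monic_X_sub_C _
  have hgmonic : g.Monic :=
    Polynomial.monic_prod_of_monic _ _ fun i _ => (Polynomial.monic_X_sub_C _).pow _
  set d0 := g.natDegree with hd0
  have hdeg : S + d0 = m := by
    have h1 : M.charpoly.natDegree = m := by
      rw [Matrix.charpoly_natDegree_eq_dim, Fintype.card_fin]
    rw [hfact, Polynomial.Monic.natDegree_mul (hXm.pow S) hgmonic, Polynomial.natDegree_pow,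
      Polynomial.natDegree_X_sub_C, mul_one] at h1
    exact h1
  set p : ℕ → Polynomial ℂ := fun j => (X - Polynomial.C (μ l)) ^ j * g with hp
  have hpmonic : ∀ j, (p j).Monic := fun j => (hXm.pow j).mul hgmonic
  have hpdeg : ∀ j, (p j).natDegree = j + d0 := by
    intro j
    rw [hp]
    simp only
    rw [Polynomial.Monic.natDegree_mul (hXm.pow j) hgmonic, Polynomial.natDegree_pow,
      Polynomial.natDegree_X_sub_C, mul_one]
  have hNval : Polynomial.aeval M (X - Polynomial.C (μ l)) = N := by
    rw [map_sub, Polynomial.aeval_X, Polynomial.aeval_C, Algebra.algebraMap_eq_smul_one, hNdef]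
  have hCH : N ^ S * Polynomial.aeval M g = 0 := by
    have h := Matrix.aeval_self_charpoly M
    rw [hfact, _root_.map_mul, map_pow, hNval] at h
    exact h
  -- observability: we can prescribe the values ⟨1, Mⁱ w⟩
  have hOdet : IsUnit (obsMatrix M (fun _ => (1 : ℂ))).det :=
    (Matrix.isUnit_iff_isUnit_det _).1 hobs
  have hsolve : ∀ x : ℕ → ℂ, ∃ w : Fin m → ℂ,
      ∀ i : Fin m, ((fun _ => (1 : ℂ)) ᵥ* M ^ (i : ℕ)) ⬝ᵥ w = x (i : ℕ) := by
    intro x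
    have hκ : Fintype.card (Fin m) = m := Fintype.card_fin m
    set O := obsMatrix M (fun _ => (1 : ℂ)) with hOdef
    set e := Fintype.equivFin (Fin m) with hedef
    set xv : Fin (Fintype.card (Fin m)) → ℂ := fun i => x ((Fin.cast hκ i) : ℕ) with hxv
    set u := O⁻¹ *ᵥ xv with hu
    refine ⟨fun kk => u (e kk), ?_⟩
    intro i
    have hOu : O *ᵥ u = xv := by
      rw [hu, Matrix.mulVec_mulVec, Matrix.mul_nonsing_inv _ hOdet, Matrix.one_mulVec]
    have h1 := congrFun hOu (Fin.cast hκ.symm i)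
    have h2 : (O *ᵥ u) (Fin.cast hκ.symm i)
        = ∑ kk : Fin m, ((fun _ => (1 : ℂ)) ᵥ* M ^ ((i : ℕ))) kk * u (e kk) := by
      rw [Matrix.mulVec, dotProduct]
      refine (Fintype.sum_equiv e _ _ ?_).symm
      intro kk
      rw [hOdef]
      simp [obsMatrix, Fin.coe_cast]
      exact Or.inl (by rw [hedef, Equiv.symm_apply_apply])
    have h3 : xv (Fin.cast hκ.symm i) = x (i : ℕ) := by
      rw [hxv]
      simp [Fin.coe_cast]
    rw [dotProduct]
    rw [← h2, h1, h3]
  -- the target coefficients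
  set a : ℕ → ℂ := fun j => if j ≤ k then (k.choose j : ℂ) * (μ l) ^ j else 0 with ha
  -- triangular solve for the monomial values
  set Tm : Matrix (Fin S) (Fin S) ℂ :=
    Matrix.of (fun j j' : Fin S => (p (j : ℕ)).coeff (d0 + (j' : ℕ))) with hTm
  have hTmtri : ∀ j j' : Fin S, (j : ℕ) < (j' : ℕ) → Tm j j' = 0 := by
    intro j j' h
    show (p (j : ℕ)).coeff (d0 + (j' : ℕ)) = 0
    apply Polynomial.coeff_eq_zero_of_natDegree_lt
    rw [hpdeg]
    omega
  have hTmdiag : ∀ j : Fin S, Tm j j = 1 := by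
    intro j
    have h := (hpmonic (j : ℕ)).coeff_natDegree
    rw [hpdeg] at h
    show (p (j : ℕ)).coeff (d0 + (j : ℕ)) = 1
    rw [Nat.add_comm]
    exact h
  have hTmdet : Tm.det = 1 := by
    rw [Matrix.det_of_lowerTriangular Tm (fun i j hij => hTmtri i j hij)]
    exact Finset.prod_eq_one fun j _ => hTmdiag j
  have hTmunit : IsUnit Tm.det := by rw [hTmdet]; exact isUnit_one
  set av : Fin S → ℂ := fun j => a (j : ℕ) with hav
  set xh := Tm⁻¹ *ᵥ av with hxh
  have hTx : Tm *ᵥ xh = av := by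
    rw [hxh, Matrix.mulVec_mulVec, Matrix.mul_nonsing_inv _ hTmunit, Matrix.one_mulVec]
  set x : ℕ → ℂ := fun i =>
    if h : d0 ≤ i ∧ i < m then xh ⟨i - d0, by omega⟩ else 0 with hx
  obtain ⟨w, hw⟩ := hsolve x
  set wcol : Matrix (Fin m) (Fin 1) ℂ := Matrix.of (fun i _ => w i) with hwcol
  have hval : ∀ P : Matrix (Fin m) (Fin m) ℂ,
      ((ones * P) * wcol) 0 0 = ((fun _ => (1 : ℂ)) ᵥ* P) ⬝ᵥ w := by
    intro P
    rw [Matrix.mul_apply, dotProduct]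
    refine Finset.sum_congr rfl fun k' _ => ?_
    rw [Matrix.mul_apply, Matrix.vecMul, dotProduct]
    simp [hones, hwcol]
  have hvalx : ∀ i : Fin m, ((ones * M ^ (i : ℕ)) * wcol) 0 0 = x (i : ℕ) := by
    intro i
    rw [hval, hw]
  -- the coefficient extraction
  have hcoef : ∀ j : ℕ, j < S →
      ((ones * (Polynomial.aeval M (p j) * wcol)) 0 0) = a j := by
    intro j hj
    have hdeglt : (p j).natDegree < m := by rw [hpdeg]; omega
    have hsum : Polynomial.aeval M (p j) = ∑ i ∈ Finset.range m, (p j).coeff i • M ^ i :=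
      Polynomial.aeval_eq_sum_range' hdeglt M
    have step1 : ones * (Polynomial.aeval M (p j) * wcol)
        = ∑ i ∈ Finset.range m, (p j).coeff i • (ones * (M ^ i * wcol)) := by
      rw [hsum, Matrix.sum_mul, Matrix.mul_sum]
      refine Finset.sum_congr rfl fun i _ => ?_
      rw [Matrix.smul_mul, Matrix.mul_smul]
    have step2 : ((ones * (Polynomial.aeval M (p j) * wcol)) 0 0)
        = ∑ i ∈ Finset.range m, (p j).coeff i * (((ones * M ^ i) * wcol) 0 0) := by
      rw [step1, Matrix.sum_apply]
      refine Finset.sum_congr rfl fun i _ => ?_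
      rw [Matrix.smul_apply, smul_eq_mul, Matrix.mul_assoc]
    rw [step2]
    have hxlow : ∀ i, i < d0 → (((ones * M ^ i) * wcol) 0 0) = 0 := by
      intro i hi
      have hi' : i < m := by omega
      have h : (((ones * M ^ i) * wcol) 0 0) = x i := hvalx ⟨i, hi'⟩
      rw [h]
      simp only [hx]
      exact dif_neg (by omega)
    have hxhigh : ∀ j' : Fin S, (((ones * M ^ (d0 + (j' : ℕ))) * wcol) 0 0) = xh j' := by
      intro j'
      have hj' : (j' : ℕ) < S := j'.isLt
      have hlt : d0 + (j' : ℕ) < m := by omega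
      have h : (((ones * M ^ (d0 + (j' : ℕ))) * wcol) 0 0) = x (d0 + (j' : ℕ)) :=
        hvalx ⟨d0 + (j' : ℕ), hlt⟩
      rw [h]
      simp only [hx]
      rw [dif_pos ⟨Nat.le_add_right _ _, hlt⟩]
      simp only [Nat.add_sub_cancel_left, Fin.eta]
    have e1 : ∑ i ∈ Finset.range m, (p j).coeff i * (((ones * M ^ i) * wcol) 0 0)
        = ∑ i ∈ Finset.Ico d0 m, (p j).coeff i * (((ones * M ^ i) * wcol) 0 0) := by
      rw [Finset.range_eq_Ico,
        ← Finset.sum_Ico_consecutive _ (Nat.zero_le d0) (show d0 ≤ m by omega)]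
      rw [Finset.sum_eq_zero, zero_add]
      intro i hi
      have hi' := (Finset.mem_Ico.mp hi).2
      rw [hxlow i hi', mul_zero]
    have e2 : ∑ i ∈ Finset.Ico d0 m, (p j).coeff i * (((ones * M ^ i) * wcol) 0 0)
        = ∑ j' ∈ Finset.range S, (p j).coeff (d0 + j') * (((ones * M ^ (d0 + j')) * wcol) 0 0) := by
      rw [Finset.sum_Ico_eq_sum_range]
      have hmS : m - d0 = S := by omega
      rw [hmS]
    have e3 : ∑ j' ∈ Finset.range S, (p j).coeff (d0 + j') * (((ones * M ^ (d0 + j')) * wcol) 0 0)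
        = ∑ j' : Fin S, Tm ⟨j, hj⟩ j' * xh j' := by
      rw [← Fin.sum_univ_eq_sum_range
        (fun j' => (p j).coeff (d0 + j') * (((ones * M ^ (d0 + j')) * wcol) 0 0)) S]
      refine Finset.sum_congr rfl fun j' _ => ?_
      rw [hxhigh j']
      rfl
    rw [e1, e2, e3]
    have e4 : ∑ j' : Fin S, Tm ⟨j, hj⟩ j' * xh j' = (Tm *ᵥ xh) ⟨j, hj⟩ := rfl
    rw [e4, hTx]
  -- binomial expansion of K^(k+1) b in terms of (KA)^j K b
  have hKsplit : K = μ l • (K * A) + 1 := by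
    have h := hK1
    rw [Matrix.mul_sub, Matrix.mul_one, Matrix.mul_smul] at h
    exact (sub_eq_iff_eq_add.mp h).trans (add_comm _ _)
  have hbin : K ^ (k + 1) * b
      = ∑ j ∈ Finset.range (k + 1), ((k.choose j : ℂ) * μ l ^ j) • ((K * A) ^ j * (K * b)) := by
    have hcomm : Commute (μ l • (K * A)) (1 : Matrix (Fin n) (Fin n) ℂ) := Commute.one_right _
    have hnat : ∀ c : ℕ, ((c : ℕ) : Matrix (Fin n) (Fin n) ℂ) = (c : ℂ) • (1 : Matrix (Fin n) (Fin n) ℂ) := by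
      intro c
      rw [← map_natCast (algebraMap ℂ (Matrix (Fin n) (Fin n) ℂ)) c, Algebra.algebraMap_eq_smul_one]
    have hpow : K ^ k = ∑ j ∈ Finset.range (k + 1), (μ l ^ j * (k.choose j : ℂ)) • (K * A) ^ j := by
      conv_lhs => rw [hKsplit]
      rw [Commute.add_pow hcomm]
      refine Finset.sum_congr rfl fun j _ => ?_
      rw [one_pow, mul_one, _root_.smul_pow, hnat, Matrix.mul_smul, Matrix.mul_one, smul_smul, mul_comm (μ l ^ j)]
    calc K ^ (k + 1) * b = K ^ k * (K * b) := by rw [pow_succ, Matrix.mul_assoc]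
      _ = ∑ j ∈ Finset.range (k + 1), ((k.choose j : ℂ) * μ l ^ j) • ((K * A) ^ j * (K * b)) := by
          rw [hpow, Matrix.sum_mul]
          refine Finset.sum_congr rfl fun j _ => ?_
          rw [Matrix.smul_mul, mul_comm (μ l ^ j)]
  -- assemble
  refine ⟨Polynomial.aeval M g * wcol, ?_⟩
  have hNj : ∀ j : ℕ, N ^ j * (Polynomial.aeval M g * wcol) = Polynomial.aeval M (p j) * wcol := by
    intro j
    rw [← Matrix.mul_assoc]
    congr 1
    rw [hp]
    simp only
    rw [_root_.map_mul, map_pow, hNval]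
  have hzero : N ^ S * (Polynomial.aeval M g * wcol) = 0 := by
    rw [← Matrix.mul_assoc, hCH, Matrix.zero_mul]
  have hHv : H * (Polynomial.aeval M g * wcol)
      = ∑ j ∈ Finset.range S, a j • ((K * A) ^ j * (K * b)) := by
    rw [iter S (Polynomial.aeval M g * wcol), hzero, Matrix.mul_zero, Matrix.mul_zero, add_zero]
    refine Finset.sum_congr rfl fun j hj => ?_
    rw [hNj j, hcoef j (Finset.mem_range.mp hj)]
  rw [hHv, hbin]
  have hsub : ∑ j ∈ Finset.range (k + 1), a j • ((K * A) ^ j * (K * b))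
      = ∑ j ∈ Finset.range S, a j • ((K * A) ^ j * (K * b)) := by
    refine Finset.sum_subset (Finset.range_subset_range.mpr (Nat.succ_le_of_lt hk)) ?_
    intro j _ hj
    have : ¬ j ≤ k := fun h => hj (Finset.mem_range.mpr (by omega))
    simp [ha, this]
  rw [← hsub]
  refine Finset.sum_congr rfl fun j hj => ?_
  have hjk : j ≤ k := by have := Finset.mem_range.mp hj; omega
  simp [ha, hjk]

lemma cmap_one {a : ℕ} : (1 : Matrix (Fin a) (Fin a) ℂ).map (starRingEnd ℂ) = 1 := by
  ext i j
  by_cases h : i = j <;> simp [Matrix.one_apply, h]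

lemma cmap_isUnit {a : ℕ} {P : Matrix (Fin a) (Fin a) ℂ} (h : IsUnit P) :
    IsUnit (P.map (starRingEnd ℂ)) := by
  rw [Matrix.isUnit_iff_isUnit_det]
  have hd : (P.map (starRingEnd ℂ)).det = (starRingEnd ℂ) P.det := by
    rw [RingHom.map_det, RingHom.mapMatrix_apply]
  rw [hd]
  exact ((Matrix.isUnit_iff_isUnit_det P).1 h).map (starRingEnd ℂ)

lemma cmap_inv {a : ℕ} {P : Matrix (Fin a) (Fin a) ℂ} (h : IsUnit P) :
    (P⁻¹).map (starRingEnd ℂ) = (P.map (starRingEnd ℂ))⁻¹ := by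
  symm
  apply Matrix.inv_eq_right_inv
  rw [← Matrix.map_mul, Matrix.mul_nonsing_inv _ ((Matrix.isUnit_iff_isUnit_det P).1 h), cmap_one]

lemma cmap_pow {a : ℕ} (P : Matrix (Fin a) (Fin a) ℂ) (r : ℕ) :
    (P ^ r).map (starRingEnd ℂ) = (P.map (starRingEnd ℂ)) ^ r := by
  induction r with
  | zero => simpa using cmap_one
  | succ r ih => rw [pow_succ, Matrix.map_mul, ih, pow_succ]

lemma diag_isUnit {m : ℕ} {v : Fin m → ℂ} (h : ∀ i, v i ≠ 0) :
    IsUnit (Matrix.diagonal v) := by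
  rw [Matrix.isUnit_iff_isUnit_det, Matrix.det_diagonal]
  exact isUnit_iff_ne_zero.mpr (Finset.prod_ne_zero_iff.mpr fun i _ => h i)

/-- Moment matching of the approximate balancing transformation: the moments of the
reduced system `(Ar, Br, Cr)` match those of `(A, B, C)` at the inverse eigenvalues of
`Λ̂_c` (up to their multiplicities) and at the conjugated inverse eigenvalues of `Λ̂_o`. -/
theorem approximate_balancing_moment_matching
    {n m : ℕ} (hmn : m < n)
    (A : Matrix (Fin n) (Fin n) ℝ) (B : Matrix (Fin n) (Fin 1) ℝ)
    (C : Matrix (Fin 1) (Fin n) ℝ)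
    (Ac : Matrix (Fin n) (Fin n) ℂ) (hAc : Ac = A.map (Complex.ofReal : ℝ → ℂ))
    (Bc : Matrix (Fin n) (Fin 1) ℂ) (hBc : Bc = B.map (Complex.ofReal : ℝ → ℂ))
    (Cc : Matrix (Fin 1) (Fin n) ℂ) (hCc : Cc = C.map (Complex.ofReal : ℝ → ℂ))
    -- the matrix Λ̂_c and its spectral data
    {qc : ℕ} (μ : Fin qc → ℂ) (s : Fin qc → ℕ)
    (Λc : Matrix (Fin m) (Fin m) ℂ)
    (hμinj : Function.Injective μ) (hμne : ∀ l, μ l ≠ 0)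
    (hcharc : Λc.charpoly = ∏ l : Fin qc, (X - Polynomial.C (μ l)) ^ (s l))
    (hobsc : Observable Λcᵀ fun _ => (1 : ℂ))
    (hinvc : ∀ l, IsUnit (1 - μ l • Ac))
    -- the matrix Λ̂_o and its spectral data
    {qo : ℕ} (ν : Fin qo → ℂ) (t : Fin qo → ℕ)
    (Λo : Matrix (Fin m) (Fin m) ℂ)
    (hνinj : Function.Injective ν) (hνne : ∀ l, ν l ≠ 0)
    (hcharo : Λo.charpoly = ∏ l : Fin qo, (X - Polynomial.C (ν l)) ^ (t l))
    (hobso : Observable Λoᵀ fun _ => (1 : ℂ))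
    (hinvo : ∀ l, IsUnit (1 - ν l • Acᵀ))
    -- the Sylvester-type equations and the (scaled) approximate Cholesky factors
    (Hc : Matrix (Fin n) (Fin m) ℂ)
    (hHc : Hc = (Matrix.of fun i (_ : Fin m) => Bc i 0) + Ac * Hc * Λcᵀ)
    (Dc : Matrix (Fin m) (Fin m) ℂ) (hDcdiag : Dc.IsDiag) (hDc : IsUnit Dc)
    (Zc : Matrix (Fin n) (Fin m) ℂ) (hZc : Zc = Hc * Dc)
    (Ho : Matrix (Fin n) (Fin m) ℂ)
    (hHo : Ho = (Matrix.of fun i (_ : Fin m) => Cc 0 i) + Acᵀ * Ho * Λoᵀ)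
    (Do : Matrix (Fin m) (Fin m) ℂ) (hDodiag : Do.IsDiag) (hDo : IsUnit Do)
    (Zo : Matrix (Fin n) (Fin m) ℂ) (hZo : Zo = Ho * Do)
    -- the SVD of Z_oᴴ Z_c and the projection matrices
    (hreg : IsUnit (Zoᴴ * Zc))
    (U T : Matrix (Fin m) (Fin m) ℂ) (σ : Fin m → ℝ)
    (hU : U ∈ Matrix.unitaryGroup (Fin m) ℂ)
    (hT : T ∈ Matrix.unitaryGroup (Fin m) ℂ)
    (hσ : ∀ i, 0 < σ i)
    (hsvd : Zoᴴ * Zc = U * Matrix.diagonal (fun i => (σ i : ℂ)) * Tᴴ)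
    (V W : Matrix (Fin n) (Fin m) ℂ)
    (hV : V = Zc * T * Matrix.diagonal (fun i => ((Real.sqrt (σ i))⁻¹ : ℂ)))
    (hW : W = Zo * U * Matrix.diagonal (fun i => ((Real.sqrt (σ i))⁻¹ : ℂ)))
    -- the reduced system
    (Ar : Matrix (Fin m) (Fin m) ℂ) (hAr : Ar = Wᴴ * Ac * V)
    (Br : Matrix (Fin m) (Fin 1) ℂ) (hBr : Br = Wᴴ * Bc)
    (Cr : Matrix (Fin 1) (Fin m) ℂ) (hCr : Cr = Cc * V)
    (hArc : ∀ l, IsUnit (Ar - (μ l)⁻¹ • 1))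
    (hAro : ∀ l, IsUnit (Ar - (starRingEnd ℂ (ν l))⁻¹ • 1)) :
    (∀ l : Fin qc, ∀ j : ℕ, j < s l →
      Cc * ((Ac - (μ l)⁻¹ • 1)⁻¹) ^ (j + 1) * Bc =
        Cr * ((Ar - (μ l)⁻¹ • 1)⁻¹) ^ (j + 1) * Br) ∧
    (∀ l : Fin qo, ∀ j : ℕ, j < t l →
      Cc * ((Ac - (starRingEnd ℂ (ν l))⁻¹ • 1)⁻¹) ^ (j + 1) * Bc =
        Cr * ((Ar - (starRingEnd ℂ (ν l))⁻¹ • 1)⁻¹) ^ (j + 1) * Br) := by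
  -- rewrite the Sylvester equations with an explicit all-ones row
  have honeB : (Matrix.of fun i (_ : Fin m) => Bc i 0) = Bc * (Matrix.of fun _ _ => (1 : ℂ) : Matrix (Fin 1) (Fin m) ℂ) := by
    ext i j
    simp [Matrix.mul_apply, Fin.sum_univ_one]
  have honeC : (Matrix.of fun i (_ : Fin m) => Cc 0 i) = Ccᵀ * (Matrix.of fun _ _ => (1 : ℂ) : Matrix (Fin 1) (Fin m) ℂ) := by
    ext i j
    simp [Matrix.mul_apply, Fin.sum_univ_one]
  have hHc' : Hc = Bc * (Matrix.of fun _ _ => (1 : ℂ) : Matrix (Fin 1) (Fin m) ℂ) + Ac * Hc * Λcᵀ := by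
    rw [← honeB]
    exact hHc
  have hHo' : Ho = Ccᵀ * (Matrix.of fun _ _ => (1 : ℂ) : Matrix (Fin 1) (Fin m) ℂ) + Acᵀ * Ho * Λoᵀ := by
    rw [← honeC]
    exact hHo
  set Dd : Matrix (Fin m) (Fin m) ℂ :=
    Matrix.diagonal (fun i => ((Real.sqrt (σ i))⁻¹ : ℂ)) with hDd
  have hsσ : ∀ i, Real.sqrt (σ i) ≠ 0 := fun i => ne_of_gt (Real.sqrt_pos.mpr (hσ i))
  have hDdunit : IsUnit Dd :=
    diag_isUnit fun i => inv_ne_zero (Complex.ofReal_ne_zero.mpr (hsσ i))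
  have hTunit : IsUnit T := ⟨⟨T, star T, (Unitary.mem_iff.mp hT).2, (Unitary.mem_iff.mp hT).1⟩, rfl⟩
  have hUunit : IsUnit U := ⟨⟨U, star U, (Unitary.mem_iff.mp hU).2, (Unitary.mem_iff.mp hU).1⟩, rfl⟩
  have hUH : Uᴴ * U = 1 := by
    have h := (Unitary.mem_iff.mp hU).1
    rwa [Matrix.star_eq_conjTranspose] at h
  have hTH : Tᴴ * T = 1 := by
    have h := (Unitary.mem_iff.mp hT).1
    rwa [Matrix.star_eq_conjTranspose] at h
  have hDdH : Ddᴴ = Dd := by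
    have hstar : star (fun i => ((Real.sqrt (σ i))⁻¹ : ℂ)) = fun i => ((Real.sqrt (σ i))⁻¹ : ℂ) := by
      funext i
      rw [Pi.star_apply, star_inv₀]
      congr 1
      exact Complex.conj_ofReal _
    rw [hDd, Matrix.diagonal_conjTranspose, hstar]
  have hWH : Wᴴ = Dd * (Uᴴ * Zoᴴ) := by
    rw [hW, Matrix.conjTranspose_mul, Matrix.conjTranspose_mul, hDdH, hDd]
  have hWV1 : Wᴴ * V = 1 := by
    rw [hWH, hV]
    have e : Dd * (Uᴴ * Zoᴴ) * (Zc * T * Dd) = Dd * (Uᴴ * ((Zoᴴ * Zc) * (T * Dd))) := by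
      simp only [Matrix.mul_assoc]
    rw [show Zc * T * Matrix.diagonal (fun i => ((Real.sqrt (σ i))⁻¹ : ℂ)) = Zc * T * Dd from by rw [hDd]]
    rw [e, hsvd]
    have e2 : Uᴴ * (U * Matrix.diagonal (fun i => (σ i : ℂ)) * Tᴴ * (T * Dd))
        = (Uᴴ * U) * (Matrix.diagonal (fun i => (σ i : ℂ)) * ((Tᴴ * T) * Dd)) := by
      simp only [Matrix.mul_assoc]
    rw [e2, hUH, hTH, Matrix.one_mul, Matrix.one_mul]
    rw [hDd, Matrix.diagonal_mul_diagonal, Matrix.diagonal_mul_diagonal]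
    have e3 : (fun i => ((Real.sqrt (σ i))⁻¹ : ℂ) * ((σ i : ℂ) * ((Real.sqrt (σ i))⁻¹ : ℂ)))
        = fun _ => (1 : ℂ) := by
      funext i
      have h0 : ((Real.sqrt (σ i) : ℝ) : ℂ) ≠ 0 := Complex.ofReal_ne_zero.mpr (hsσ i)
      have hs : ((σ i : ℝ) : ℂ) = ((Real.sqrt (σ i) : ℝ) : ℂ) * ((Real.sqrt (σ i) : ℝ) : ℂ) := by
        rw [← Complex.ofReal_mul, Real.mul_self_sqrt (le_of_lt (hσ i))]
      rw [hs]
      field_simp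
    rw [e3, Matrix.diagonal_one]
  constructor
  · -- moments at the inverse eigenvalues of Λ̂c
    intro l j hj
    have hμl := hμne l
    have hτ : -(μ l)⁻¹ ≠ 0 := neg_ne_zero.mpr (inv_ne_zero hμl)
    have hshift : Ac - (μ l)⁻¹ • 1 = (-(μ l)⁻¹) • (1 - μ l • Ac) := shift_eq hμl Ac
    have hAunit : IsUnit (Ac - (μ l)⁻¹ • 1) := by
      rw [hshift]; exact isUnit_smul_mat hτ (hinvc l)
    have hEinv : (Ac - (μ l)⁻¹ • 1)⁻¹ = (-(μ l)) • (1 - μ l • Ac)⁻¹ := by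
      rw [hshift, inv_smul_mat hτ (hinvc l), inv_neg, inv_inv]
    have hcharT : (Λcᵀ).charpoly = ∏ l : Fin qc, (X - Polynomial.C (μ l)) ^ (s l) := by
      rw [charpoly_transpose'', hcharc]
    set R : Matrix (Fin m) (Fin m) ℂ := Dc * (T * Dd) with hR
    have hRunit : IsUnit R := hDc.mul (hTunit.mul hDdunit)
    have hVR : V = Hc * R := by
      rw [hV, hZc, hR, hDd]
      simp only [Matrix.mul_assoc]
    have hmem : ∀ i, i ≤ j → ∃ y : Matrix (Fin m) (Fin 1) ℂ,
        V * y = ((Ac - (μ l)⁻¹ • 1)⁻¹) ^ (i + 1) * Bc := by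
      intro i hi
      obtain ⟨y, hy⟩ := krylov_mem Ac Hc Bc Λcᵀ μ s hcharT hobsc hHc' l (hinvc l) i (by omega)
      refine ⟨R⁻¹ * ((-(μ l)) ^ (i + 1) • y), ?_⟩
      rw [hVR]
      calc Hc * R * (R⁻¹ * ((-(μ l)) ^ (i + 1) • y))
          = Hc * ((R * R⁻¹) * ((-(μ l)) ^ (i + 1) • y)) := by simp only [Matrix.mul_assoc]
        _ = (-(μ l)) ^ (i + 1) • (Hc * y) := by
            rw [Matrix.mul_nonsing_inv _ ((Matrix.isUnit_iff_isUnit_det R).1 hRunit),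
              Matrix.one_mul, Matrix.mul_smul]
        _ = ((Ac - (μ l)⁻¹ • 1)⁻¹) ^ (i + 1) * Bc := by
            rw [hy, hEinv, _root_.smul_pow, Matrix.smul_mul]
    have hmm := moment_match Ac V W Bc Cc ((μ l)⁻¹) hWV1 hAunit
      (by rw [← hAr]; exact hArc l) j hmem
    rw [← hAr, ← hBr, ← hCr] at hmm
    exact hmm
  · -- moments at the conjugated inverse eigenvalues of Λ̂o
    intro l j hj
    have hνl := hνne l
    set ν' : ℂ := starRingEnd ℂ (ν l) with hν'
    have hν'ne : ν' ≠ 0 := by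
      rw [hν']
      simpa using hνl
    have hKoc : ((1 - ν l • Acᵀ)).map (starRingEnd ℂ) = 1 - ν' • Acᵀ := by
      rw [hAc, hν']
      ext i j
      by_cases h : i = j <;>
        simp [Matrix.map_apply, Matrix.sub_apply, Matrix.smul_apply, Matrix.one_apply, h,
          Matrix.transpose_apply, Complex.conj_ofReal, smul_eq_mul]
    have hKounit' : IsUnit (1 - ν' • Acᵀ) := by
      rw [← hKoc]; exact cmap_isUnit (hinvo l)
    have hτ : -ν'⁻¹ ≠ 0 := neg_ne_zero.mpr (inv_ne_zero hν'ne)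
    have hshift : Acᵀ - ν'⁻¹ • 1 = (-ν'⁻¹) • (1 - ν' • Acᵀ) := shift_eq hν'ne Acᵀ
    have hAunit : IsUnit (Acᵀ - ν'⁻¹ • 1) := by
      rw [hshift]; exact isUnit_smul_mat hτ hKounit'
    have hEinv : (Acᵀ - ν'⁻¹ • 1)⁻¹ = (-ν') • (1 - ν' • Acᵀ)⁻¹ := by
      rw [hshift, inv_smul_mat hτ hKounit', inv_neg, inv_inv]
    have hcharoT : (Λoᵀ).charpoly = ∏ l : Fin qo, (X - Polynomial.C (ν l)) ^ (t l) := by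
      rw [charpoly_transpose'', hcharo]
    have hCct : (Ccᵀ).map (starRingEnd ℂ) = Ccᵀ := by
      rw [hCc]
      ext i j
      simp [Matrix.map_apply, Matrix.transpose_apply, Complex.conj_ofReal]
    set R2 : Matrix (Fin m) (Fin m) ℂ := Do * (U * Dd) with hR2
    have hR2unit : IsUnit R2 := hDo.mul (hUunit.mul hDdunit)
    have hWR : W = Ho * R2 := by
      rw [hW, hZo, hR2, hDd]
      simp only [Matrix.mul_assoc]
    set Wc := W.map (starRingEnd ℂ) with hWc
    set Vc := V.map (starRingEnd ℂ) with hVc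
    have hWcR : Wc = (Ho.map (starRingEnd ℂ)) * (R2.map (starRingEnd ℂ)) := by
      rw [hWc, hWR, Matrix.map_mul]
    have hR2cunit : IsUnit (R2.map (starRingEnd ℂ)) := cmap_isUnit hR2unit
    have hmem : ∀ i, i ≤ j → ∃ y : Matrix (Fin m) (Fin 1) ℂ,
        Wc * y = ((Acᵀ - ν'⁻¹ • 1)⁻¹) ^ (i + 1) * Ccᵀ := by
      intro i hi
      obtain ⟨y, hy⟩ := krylov_mem Acᵀ Ho Ccᵀ Λoᵀ ν t hcharoT hobso hHo' l (hinvo l) i (by omega)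
      have hy2 := congrArg (fun X => X.map (starRingEnd ℂ)) hy
      rw [Matrix.map_mul, Matrix.map_mul, cmap_pow, cmap_inv (hinvo l), hKoc, hCct] at hy2
      refine ⟨(R2.map (starRingEnd ℂ))⁻¹ * ((-ν') ^ (i + 1) • (y.map (starRingEnd ℂ))), ?_⟩
      rw [hWcR]
      calc (Ho.map (starRingEnd ℂ)) * (R2.map (starRingEnd ℂ))
            * ((R2.map (starRingEnd ℂ))⁻¹ * ((-ν') ^ (i + 1) • (y.map (starRingEnd ℂ))))
          = (Ho.map (starRingEnd ℂ)) * (((R2.map (starRingEnd ℂ)) * (R2.map (starRingEnd ℂ))⁻¹)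
            * ((-ν') ^ (i + 1) • (y.map (starRingEnd ℂ)))) := by simp only [Matrix.mul_assoc]
        _ = (-ν') ^ (i + 1) • ((Ho.map (starRingEnd ℂ)) * (y.map (starRingEnd ℂ))) := by
            rw [Matrix.mul_nonsing_inv _ ((Matrix.isUnit_iff_isUnit_det _).1 hR2cunit),
              Matrix.one_mul, Matrix.mul_smul]
        _ = ((Acᵀ - ν'⁻¹ • 1)⁻¹) ^ (i + 1) * Ccᵀ := by
            rw [hy2, hEinv, _root_.smul_pow, Matrix.smul_mul]
    have hVcH : Vcᴴ = Vᵀ := by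
      rw [hVc]
      ext i j
      rw [Matrix.conjTranspose_apply, Matrix.map_apply, Matrix.transpose_apply,
        starRingEnd_apply, star_star]
    have hWcT : Wc = (Wᴴ)ᵀ := by
      rw [hWc]
      ext i j
      rw [Matrix.map_apply, Matrix.transpose_apply, Matrix.conjTranspose_apply,
        starRingEnd_apply]
    have hWV2 : Vcᴴ * Wc = 1 := by
      rw [hVcH, hWcT, ← Matrix.transpose_mul, hWV1, Matrix.transpose_one]
    have hArT : Vcᴴ * Acᵀ * Wc = Arᵀ := by
      rw [hVcH, hWcT, hAr, Matrix.transpose_mul, Matrix.transpose_mul]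
      simp only [Matrix.mul_assoc]
    have hArunit : IsUnit (Vcᴴ * Acᵀ * Wc - ν'⁻¹ • 1) := by
      rw [hArT, show Arᵀ - ν'⁻¹ • 1 = (Ar - ν'⁻¹ • 1)ᵀ from by
        rw [Matrix.transpose_sub, Matrix.transpose_smul, Matrix.transpose_one]]
      rw [Matrix.isUnit_iff_isUnit_det, Matrix.det_transpose, ← Matrix.isUnit_iff_isUnit_det]
      exact hAro l
    have hmm := moment_match Acᵀ Wc Vc Ccᵀ Bcᵀ (ν'⁻¹) hWV2 hAunit hArunit j hmem
    have hBrT : Bcᵀ * Wc = Brᵀ := by rw [hWcT, hBr, Matrix.transpose_mul]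
    have hCrT : Vcᴴ * Ccᵀ = Crᵀ := by rw [hVcH, hCr, Matrix.transpose_mul]
    rw [hArT, hBrT, hCrT] at hmm
    rw [show Acᵀ - ν'⁻¹ • 1 = (Ac - ν'⁻¹ • 1)ᵀ from by
        rw [Matrix.transpose_sub, Matrix.transpose_smul, Matrix.transpose_one],
      show Arᵀ - ν'⁻¹ • 1 = (Ar - ν'⁻¹ • 1)ᵀ from by
        rw [Matrix.transpose_sub, Matrix.transpose_smul, Matrix.transpose_one],
      ← Matrix.transpose_nonsing_inv, ← Matrix.transpose_nonsing_inv,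
      ← Matrix.transpose_pow, ← Matrix.transpose_pow] at hmm
    have hfin := congrArg Matrix.transpose hmm
    simp only [Matrix.transpose_mul, Matrix.transpose_transpose] at hfin
    simp only [← Matrix.mul_assoc] at hfin
    exact hfin
end

section
/- Let Z_c, Z_o ∈ ℂ^{n×m} and suppose Z_o^H Z_c ∈ ℂ^{m×m} is invertible. Let Z_o^H Z_c = U Σ T^H be a singular value decomposition with U, T ∈ ℂ^{m×m} unitary and Σ diagonal with positive diagonal entries, and define V = Z_c T Σ^{-1/2} and W = Z_o U Σ^{-1/2}. Then W^H V = I_m, the column span of V equals the column span of Z_c, and the column span of W equals the column span of Z_o. -/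
open Matrix

lemma span_mul_right_invertible {n m : ℕ} (A : Matrix (Fin n) (Fin m) ℂ)
    (M : Matrix (Fin m) (Fin m) ℂ) (hM : IsUnit M) :
    Submodule.span ℂ (Set.range (A * M)ᵀ) = Submodule.span ℂ (Set.range Aᵀ) := by
  change Submodule.span ℂ (Set.range (A * M).col) = Submodule.span ℂ (Set.range A.col)
  rw [← Matrix.range_mulVecLin, ← Matrix.range_mulVecLin, Matrix.mulVecLin_mul]
  apply LinearMap.range_comp_of_range_eq_top
  rw [LinearMap.range_eq_top]
  intro x
  refine ⟨(M⁻¹).mulVec x, ?_⟩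
  rw [Matrix.mulVecLin_apply, Matrix.mulVec_mulVec,
    Matrix.mul_nonsing_inv M ((Matrix.isUnit_iff_isUnit_det M).mp hM), Matrix.one_mulVec]

/-- Properties of the projection matrices built from an SVD of `Z_oᴴ Z_c`:
`WᴴV = I`, `span(V) = span(Z_c)` and `span(W) = span(Z_o)`. -/
theorem projection_matrices_from_svd
    {n m : ℕ} (Zc Zo : Matrix (Fin n) (Fin m) ℂ)
    (hreg : IsUnit (Zoᴴ * Zc))
    (U T : Matrix (Fin m) (Fin m) ℂ) (σ : Fin m → ℝ)
    (hU : U ∈ Matrix.unitaryGroup (Fin m) ℂ)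
    (hT : T ∈ Matrix.unitaryGroup (Fin m) ℂ)
    (hσ : ∀ i, 0 < σ i)
    (hsvd : Zoᴴ * Zc = U * Matrix.diagonal (fun i => (σ i : ℂ)) * Tᴴ)
    (V W : Matrix (Fin n) (Fin m) ℂ)
    (hV : V = Zc * T * Matrix.diagonal (fun i => ((Real.sqrt (σ i))⁻¹ : ℂ)))
    (hW : W = Zo * U * Matrix.diagonal (fun i => ((Real.sqrt (σ i))⁻¹ : ℂ))) :
    Wᴴ * V = 1 ∧
    Submodule.span ℂ (Set.range Vᵀ) = Submodule.span ℂ (Set.range Zcᵀ) ∧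
    Submodule.span ℂ (Set.range Wᵀ) = Submodule.span ℂ (Set.range Zoᵀ) := by
  have hUU : Uᴴ * U = 1 := by
    simpa [Matrix.star_eq_conjTranspose] using hU.1
  have hTT : Tᴴ * T = 1 := by
    simpa [Matrix.star_eq_conjTranspose] using hT.1
  have hdstar : (Matrix.diagonal (fun i => ((Real.sqrt (σ i))⁻¹ : ℂ)))ᴴ
      = Matrix.diagonal (fun i => ((Real.sqrt (σ i))⁻¹ : ℂ)) := by
    ext i j
    rcases eq_or_ne i j with h | h <;>
      simp [Matrix.conjTranspose_apply, Matrix.diagonal_apply, h, Complex.conj_ofReal,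
        eq_comm]
  have hTunit : IsUnit T := ⟨Unitary.toUnits ⟨T, hT⟩, rfl⟩
  have hUunit : IsUnit U := ⟨Unitary.toUnits ⟨U, hU⟩, rfl⟩
  have hdunit : IsUnit (Matrix.diagonal (fun i => ((Real.sqrt (σ i))⁻¹ : ℂ))) := by
    rw [Matrix.isUnit_iff_isUnit_det, Matrix.det_diagonal]
    refine isUnit_iff_ne_zero.mpr (Finset.prod_ne_zero_iff.mpr fun i _ => ?_)
    exact inv_ne_zero
      (by simpa using Complex.ofReal_ne_zero.mpr (ne_of_gt (Real.sqrt_pos.mpr (hσ i))))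
  refine ⟨?_, ?_, ?_⟩
  · have hU' : ∀ X : Matrix (Fin m) (Fin m) ℂ, Uᴴ * (U * X) = X := fun X => by
      rw [← Matrix.mul_assoc, hUU, Matrix.one_mul]
    have hT' : ∀ X : Matrix (Fin m) (Fin m) ℂ, Tᴴ * (T * X) = X := fun X => by
      rw [← Matrix.mul_assoc, hTT, Matrix.one_mul]
    have key : Wᴴ * V = Matrix.diagonal (fun i => ((Real.sqrt (σ i))⁻¹ : ℂ)) *
        (Uᴴ * (Zoᴴ * (Zc * (T * Matrix.diagonal (fun i => ((Real.sqrt (σ i))⁻¹ : ℂ)))))) := by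
      rw [hV, hW]
      simp only [Matrix.conjTranspose_mul, hdstar, Matrix.mul_assoc]
    rw [key]
    have hsvd' : Zoᴴ * (Zc * (T * Matrix.diagonal (fun i => ((Real.sqrt (σ i))⁻¹ : ℂ))))
        = U * (Matrix.diagonal (fun i => (σ i : ℂ)) *
            (Tᴴ * (T * Matrix.diagonal (fun i => ((Real.sqrt (σ i))⁻¹ : ℂ))))) := by
      calc Zoᴴ * (Zc * (T * Matrix.diagonal (fun i => ((Real.sqrt (σ i))⁻¹ : ℂ))))
          = (Zoᴴ * Zc) * (T * Matrix.diagonal (fun i => ((Real.sqrt (σ i))⁻¹ : ℂ))) := by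
            rw [Matrix.mul_assoc]
        _ = _ := by rw [hsvd]; simp only [Matrix.mul_assoc]
    rw [hsvd', hU', hT', Matrix.diagonal_mul_diagonal, Matrix.diagonal_mul_diagonal]
    have hfun : (fun i => (((Real.sqrt (σ i) : ℝ) : ℂ))⁻¹ * ((σ i : ℂ) * (((Real.sqrt (σ i) : ℝ) : ℂ))⁻¹))
        = (1 : Fin m → ℂ) := by
      funext i
      show _ = (1 : ℂ)
      have hs : ((Real.sqrt (σ i) : ℝ) : ℂ) ≠ 0 :=
        Complex.ofReal_ne_zero.mpr (ne_of_gt (Real.sqrt_pos.mpr (hσ i)))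
      have haa : ((Real.sqrt (σ i) : ℝ) : ℂ) * ((Real.sqrt (σ i) : ℝ) : ℂ) = (σ i : ℂ) := by
        rw [← Complex.ofReal_mul, Real.mul_self_sqrt (hσ i).le]
      show ((Real.sqrt (σ i) : ℝ) : ℂ)⁻¹ * ((σ i : ℂ) * ((Real.sqrt (σ i) : ℝ) : ℂ)⁻¹) = 1
      rw [← haa]
      field_simp
    rw [hfun]; exact Matrix.diagonal_one
  · rw [hV, Matrix.mul_assoc]
    exact span_mul_right_invertible _ _ (hTunit.mul hdunit)
  · rw [hW, Matrix.mul_assoc]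
    exact span_mul_right_invertible _ _ (hUunit.mul hdunit)
end

section
/- Let A ∈ ℝ^{n×n}, Λ ∈ ℂ^{s×s}, β ∈ ℂ^s, h_0 ∈ ℝ^n, and let ω_1, ..., ω_N > 0. Suppose matrices H_j ∈ ℂ^{n×s} and vectors h_j ∈ ℂ^n satisfy, for j = 1, ..., N, the recurrences H_j = h_{j-1} 𝟙_s^T + ω_j A H_j Λ^T and h_j = h_{j-1} + ω_j A H_j β. Then the concatenated matrix Ĥ = [H_1, ..., H_N] ∈ ℂ^{n×Ns} satisfies Ĥ = h_0 𝟙_{Ns}^T + A Ĥ Λ̂^T, where Λ̂^T ∈ ℂ^{Ns×Ns} is the block upper triangular matrix whose j-th diagonal block is ω_j Λ^T and whose (i, j) block for i < j is ω_i [β, ..., β] = ω_i β 𝟙_s^T. -/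
open Matrix

/-- Unrolling `N` steps of a Runge-Kutta recurrence into a single block equation:
the concatenation `Ĥ = [H_1, …, H_N]` satisfies `Ĥ = h₀𝟙ᵀ + AĤΛ̂ᵀ` where `Λ̂ᵀ` is
block upper triangular with diagonal blocks `ω_j Λᵀ` and off-diagonal blocks
`ω_i β𝟙ᵀ` (for block position `(i,j)`, `i < j`). -/
theorem runge_kutta_unrolled_block_equation
    {n s N : ℕ} (A : Matrix (Fin n) (Fin n) ℝ)
    (Λ : Matrix (Fin s) (Fin s) ℂ) (β : Fin s → ℂ)
    (ω : Fin N → ℝ) (hω : ∀ j, 0 < ω j)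
    (H : Fin N → Matrix (Fin n) (Fin s) ℂ) (h : Fin (N + 1) → Fin n → ℂ)
    (hrecH : ∀ j : Fin N,
      H j = (Matrix.of fun i (_ : Fin s) => h j.castSucc i) +
        (ω j : ℂ) • (A.map (Complex.ofReal : ℝ → ℂ) * H j * Λᵀ))
    (hrech : ∀ j : Fin N,
      h j.succ = h j.castSucc +
        (ω j : ℂ) • ((A.map (Complex.ofReal : ℝ → ℂ) * H j) *ᵥ β)) :
    (Matrix.of fun i (jl : Fin N × Fin s) => H jl.1 i jl.2) =
      (Matrix.of fun i (_ : Fin N × Fin s) => h 0 i) +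
        A.map (Complex.ofReal : ℝ → ℂ) *
          (Matrix.of fun i (jl : Fin N × Fin s) => H jl.1 i jl.2) *
          (Matrix.of fun (ip : Fin N × Fin s) (jq : Fin N × Fin s) =>
            if ip.1 = jq.1 then (ω ip.1 : ℂ) * Λᵀ ip.2 jq.2
            else if ip.1 < jq.1 then (ω ip.1 : ℂ) * β ip.2 else 0) := by
  have aux : ∀ j : Fin (N + 1), ∀ i, h j i = h 0 i +
      ∑ p : Fin N, if (p : ℕ) < (j : ℕ) then
        (ω p : ℂ) * ((A.map (Complex.ofReal : ℝ → ℂ) * H p) *ᵥ β) i else 0 := by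
    intro j
    induction j using Fin.induction with
    | zero => intro i; simp
    | succ p ih =>
        intro i
        have hr := congrFun (hrech p) i
        rw [hr]
        simp only [Pi.add_apply, Pi.smul_apply, smul_eq_mul, ih i]
        rw [add_assoc]
        congr 1
        have split : ∀ q : Fin N,
            (if (q : ℕ) < ((p.succ : Fin (N+1)) : ℕ) then
              (ω q : ℂ) * ((A.map (Complex.ofReal : ℝ → ℂ) * H q) *ᵥ β) i else 0) =
            (if (q : ℕ) < ((p.castSucc : Fin (N+1)) : ℕ) then
              (ω q : ℂ) * ((A.map (Complex.ofReal : ℝ → ℂ) * H q) *ᵥ β) i else 0) +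
            (if q = p then (ω q : ℂ) * ((A.map (Complex.ofReal : ℝ → ℂ) * H q) *ᵥ β) i else 0) := by
          intro q
          simp only [Fin.val_succ, Fin.coe_castSucc]
          rcases lt_trichotomy (q : ℕ) (p : ℕ) with hlt | heq | hgt
          · rw [if_pos (Nat.lt_succ_of_lt hlt), if_pos hlt, if_neg (by
              intro hq; rw [hq] at hlt; exact lt_irrefl _ hlt), add_zero]
          · have hq : q = p := Fin.ext heq
            rw [if_pos (by omega), if_neg (by omega), if_pos hq, zero_add, hq]
          · rw [if_neg (by omega), if_neg (by omega), if_neg (by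
              intro hq; rw [hq] at hgt; exact lt_irrefl _ hgt), add_zero]
        rw [Finset.sum_congr rfl (fun q _ => split q), Finset.sum_add_distrib,
          Finset.sum_ite_eq' Finset.univ p]
        simp
  ext i jl
  obtain ⟨j, l⟩ := jl
  simp only [Matrix.add_apply, Matrix.mul_apply, Matrix.of_apply]
  rw [Fintype.sum_prod_type]
  have hAH : ∀ (p : Fin N) (q : Fin s),
      (∑ k, A.map (Complex.ofReal : ℝ → ℂ) i k * H p k q) =
      (A.map (Complex.ofReal : ℝ → ℂ) * H p) i q := by
    intro p q; rw [Matrix.mul_apply]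
  have key : ∀ p : Fin N,
      (∑ q : Fin s, (∑ k, A.map (Complex.ofReal : ℝ → ℂ) i k * H p k q) *
        (if p = j then (ω p : ℂ) * Λᵀ q l else if p < j then (ω p : ℂ) * β q else 0)) =
      (if p = j then (ω j : ℂ) * (A.map (Complex.ofReal : ℝ → ℂ) * H j * Λᵀ) i l else 0) +
      (if (p : ℕ) < (j : ℕ) then (ω p : ℂ) * ((A.map (Complex.ofReal : ℝ → ℂ) * H p) *ᵥ β) i else 0) := by
    intro p
    rcases eq_or_ne p j with rfl | hne
    · simp only [if_pos rfl, if_true, eq_self_iff_true, if_neg (lt_irrefl (p : ℕ)), add_zero,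
        Matrix.mul_apply (M := A.map (Complex.ofReal : ℝ → ℂ) * H p)]
      rw [Finset.mul_sum]
      refine Finset.sum_congr rfl fun q _ => ?_
      rw [hAH]; ring
    · simp only [if_neg hne, zero_add]
      by_cases hlt : p < j
      · simp only [if_pos hlt, if_pos (show (p : ℕ) < (j : ℕ) from hlt)]
        rw [Matrix.mulVec, dotProduct, Finset.mul_sum]
        refine Finset.sum_congr rfl fun q _ => ?_
        rw [hAH]; ring
      · simp only [if_neg hlt, if_neg (show ¬ (p : ℕ) < (j : ℕ) from hlt)]
        simp
  dsimp only
  rw [Finset.sum_congr rfl (fun p _ => key p), Finset.sum_add_distrib,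
    Finset.sum_ite_eq' Finset.univ j]
  simp only [Finset.mem_univ, if_pos]
  have := congrFun (congrFun (hrecH j) i) l
  simp only [Matrix.add_apply, Matrix.smul_apply, Matrix.of_apply, smul_eq_mul] at this
  rw [this, aux j.castSucc i]
  simp only [Fin.coe_castSucc]
  ring
end

section
/- Let A ∈ ℝ^{n×n}, Λ ∈ ℂ^{s×s}, h ∈ ℂ^n and ω > 0. Let S ∈ ℂ^{s×s} be invertible such that (Λ')^T := S Λ^T S^{-1} is upper triangular with diagonal entries μ_1, ..., μ_s (the eigenvalues of Λ), and set (α_1, ..., α_s) := 𝟙_s^T S^{-1}. Assume I_n − ω μ_i A is invertible for each i = 1, ..., s. Then a matrix H ∈ ℂ^{n×s} satisfies H = h 𝟙_s^T + ω A H Λ^T if and only if H = H' S where H' = [h'_1, ..., h'_s] ∈ ℂ^{n×s} is the unique solution of the triangular chain of linear systems (I_n − ω μ_i A) h'_i = α_i h + ω Σ_{l=1}^{i-1} λ'_{il} A h'_l for i = 1, ..., s, with λ'_{il} the entries of Λ' = (S Λ^T S^{-1})^T. -/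
open Matrix

/-- Solving the stage equation `H = h𝟙ᵀ + ωAHΛᵀ` via a Schur decomposition
`(Λ')ᵀ = SΛᵀS⁻¹`: `H` solves the stage equation iff `H = H'S` where the columns of
`H'` solve the triangular chain `(I − ωμᵢA)h'ᵢ = αᵢh + ω ∑_{l<i} λ'ᵢₗ A h'ₗ`,
which has a unique solution. -/
theorem stage_equation_schur_decomposition
    {n s : ℕ} (A : Matrix (Fin n) (Fin n) ℝ) (Λ : Matrix (Fin s) (Fin s) ℂ)
    (h : Fin n → ℂ) (ω : ℝ) (hω : 0 < ω)
    (Ac : Matrix (Fin n) (Fin n) ℂ) (hAc : Ac = A.map (Complex.ofReal : ℝ → ℂ))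
    (S : Matrix (Fin s) (Fin s) ℂ) (hS : IsUnit S)
    (htri : Matrix.BlockTriangular (S * Λᵀ * S⁻¹) id)
    (μ : Fin s → ℂ) (hμ : ∀ i, μ i = (S * Λᵀ * S⁻¹) i i)
    (α : Fin s → ℂ) (hα : α = (fun _ => (1 : ℂ)) ᵥ* S⁻¹)
    (Λ' : Matrix (Fin s) (Fin s) ℂ) (hΛ' : Λ' = (S * Λᵀ * S⁻¹)ᵀ)
    (hinv : ∀ i, IsUnit (1 - ((ω : ℂ) * μ i) • Ac)) :
    (∃! H' : Matrix (Fin n) (Fin s) ℂ, ∀ i : Fin s,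
      (1 - ((ω : ℂ) * μ i) • Ac) *ᵥ (fun r => H' r i) =
        α i • h + (ω : ℂ) • ∑ l ∈ Finset.Iio i, Λ' i l • (Ac *ᵥ fun r => H' r l)) ∧
    (∀ H : Matrix (Fin n) (Fin s) ℂ,
      (H = (Matrix.of fun i (_ : Fin s) => h i) + (ω : ℂ) • (Ac * H * Λᵀ)) ↔
      (∃ H' : Matrix (Fin n) (Fin s) ℂ,
        (∀ i : Fin s,
          (1 - ((ω : ℂ) * μ i) • Ac) *ᵥ (fun r => H' r i) =
            α i • h + (ω : ℂ) • ∑ l ∈ Finset.Iio i, Λ' i l • (Ac *ᵥ fun r => H' r l)) ∧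
        H = H' * S)) := by
  set T : Matrix (Fin s) (Fin s) ℂ := S * Λᵀ * S⁻¹ with hT
  set C : Matrix (Fin n) (Fin s) ℂ := Matrix.of (fun r i => α i * h r) with hC
  have hSd : IsUnit S.det := (Matrix.isUnit_iff_isUnit_det S).mp hS
  -- triangularity : T j i = 0 for i < j
  have hT0 : ∀ i j : Fin s, i < j → T j i = 0 := fun i j hij => htri hij
  -- chain ↔ affine equation
  have chain_iff : ∀ H' : Matrix (Fin n) (Fin s) ℂ,
      (∀ i : Fin s,
        (1 - ((ω : ℂ) * μ i) • Ac) *ᵥ (fun r => H' r i) =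
          α i • h + (ω : ℂ) • ∑ l ∈ Finset.Iio i, Λ' i l • (Ac *ᵥ fun r => H' r l)) ↔
      H' = C + (ω : ℂ) • (Ac * H' * T) := by
    intro H'
    rw [← Matrix.ext_iff, forall_comm]
    apply forall_congr'; intro i
    rw [funext_iff]
    apply forall_congr'; intro r
    have lhs : ((1 - ((ω : ℂ) * μ i) • Ac) *ᵥ (fun r => H' r i)) r
        = H' r i - ((ω : ℂ) * μ i) * ((Ac *ᵥ fun r => H' r i) r) := by
      simp [Matrix.sub_mulVec, Matrix.smul_mulVec, Matrix.one_mulVec]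
    have rhs : (α i • h + (ω : ℂ) • ∑ l ∈ Finset.Iio i, Λ' i l • (Ac *ᵥ fun r => H' r l)) r
        = α i * h r + (ω : ℂ) * ∑ l ∈ Finset.Iio i, Λ' i l * ((Ac *ᵥ fun r => H' r l) r) := by
      simp [Finset.sum_apply]
    rw [lhs, rhs]
    have hsum : ∑ j : Fin s, (Ac * H') r j * T j i
        = ((Ac *ᵥ fun r => H' r i) r) * μ i
          + ∑ l ∈ Finset.Iio i, Λ' i l * ((Ac *ᵥ fun r => H' r l) r) := by
      have hsub : ∑ j : Fin s, (Ac * H') r j * T j i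
          = ∑ j ∈ Finset.Iic i, (Ac * H') r j * T j i := by
        refine (Finset.sum_subset (Finset.subset_univ _) ?_).symm
        intro j _ hj
        rw [hT0 i j (by simpa using hj), mul_zero]
      rw [hsub, ← Finset.Iio_insert, Finset.sum_insert (by simp)]
      congr 1
      · rw [hμ i]
        simp [Matrix.mul_apply, Matrix.mulVec, dotProduct]
      · apply Finset.sum_congr rfl
        intro l _
        rw [hΛ']
        simp [Matrix.mul_apply, Matrix.mulVec, dotProduct, mul_comm]
    have hm : (C + (ω : ℂ) • (Ac * H' * T)) r i
        = α i * h r + (ω : ℂ) * ∑ j : Fin s, (Ac * H') r j * T j i := by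
      simp only [Matrix.add_apply, Matrix.smul_apply, smul_eq_mul, hC, Matrix.of_apply]
      rw [Matrix.mul_apply]
    rw [hm, hsum]
    constructor
    · intro he; linear_combination he
    · intro he; linear_combination he
  -- homogeneous solutions are zero
  have homog : ∀ D : Matrix (Fin n) (Fin s) ℂ, D = (ω : ℂ) • (Ac * D * T) → D = 0 := by
    intro D hD
    have col : ∀ k : ℕ, ∀ i : Fin s, (i : ℕ) = k → ∀ r, D r i = 0 := by
      intro k
      induction k using Nat.strong_induction_on with
      | _ k IH =>
        intro i hik r
        have hcol : ∀ l : Fin s, l < i → ∀ r, D r l = 0 := by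
          intro l hl
          have hl' : (l : ℕ) < (i : ℕ) := hl
          exact IH l.val (hik ▸ hl') l rfl
        have hveq : (1 - ((ω : ℂ) * μ i) • Ac) *ᵥ (fun r => D r i) = 0 := by
          funext r'
          have hDe : D r' i = (ω : ℂ) * ∑ j : Fin s, (Ac * D) r' j * T j i := by
            conv_lhs => rw [hD]
            simp only [Matrix.smul_apply, smul_eq_mul]
            rw [Matrix.mul_apply]
          have hz : ∀ j ∈ Finset.univ, j ∉ ({i} : Finset (Fin s)) →
              (Ac * D) r' j * T j i = 0 := by
            intro j _ hj
            rcases lt_or_gt_of_ne (by simpa using hj : j ≠ i) with hji | hji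
            · have : (Ac * D) r' j = 0 := by
                simp only [Matrix.mul_apply]
                refine Finset.sum_eq_zero fun k _ => ?_
                rw [hcol j hji k, mul_zero]
              rw [this, zero_mul]
            · rw [hT0 i j hji, mul_zero]
          have hsum : ∑ j : Fin s, (Ac * D) r' j * T j i = (Ac * D) r' i * μ i := by
            rw [← Finset.sum_subset (Finset.subset_univ {i}) hz, Finset.sum_singleton, hμ i]
          have hac : (Ac * D) r' i = (Ac *ᵥ fun r => D r i) r' := by
            simp [Matrix.mul_apply, Matrix.mulVec, dotProduct]
          simp only [Matrix.sub_mulVec, Matrix.smul_mulVec, Matrix.one_mulVec,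
            Pi.sub_apply, Pi.smul_apply, smul_eq_mul, Pi.zero_apply]
          rw [hDe, hsum, hac]
          ring
        have hinj := Matrix.mulVec_injective_iff_isUnit.mpr (hinv i)
        have heq := hinj (by rw [hveq, Matrix.mulVec_zero] :
          (1 - ((ω : ℂ) * μ i) • Ac) *ᵥ (fun r => D r i) =
            (1 - ((ω : ℂ) * μ i) • Ac) *ᵥ 0)
        exact congrFun heq r
    ext r i
    exact col i.val i rfl r
  -- the linear map X ↦ X - ω•(Ac*X*T)
  let L : Matrix (Fin n) (Fin s) ℂ →ₗ[ℂ] Matrix (Fin n) (Fin s) ℂ :=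
    { toFun := fun X => X - (ω : ℂ) • (Ac * X * T)
      map_add' := fun X Y => by
        simp [Matrix.mul_add, Matrix.add_mul, smul_add]
        abel
      map_smul' := fun c X => by
        simp [Matrix.mul_smul, Matrix.smul_mul, smul_sub, smul_comm c] }
  have hLinj : Function.Injective L := by
    intro X Y hXY
    have hz : L (X - Y) = 0 := by rw [map_sub, hXY, sub_self]
    have hz' : (X - Y) - (ω : ℂ) • (Ac * (X - Y) * T) = 0 := hz
    have := homog (X - Y) (sub_eq_zero.mp hz')
    exact sub_eq_zero.mp this
  have hLsurj : Function.Surjective L := LinearMap.injective_iff_surjective.mp hLinj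
  obtain ⟨H'₀, hH'₀⟩ := hLsurj C
  have hH'₀eq : H'₀ = C + (ω : ℂ) • (Ac * H'₀ * T) := by
    have hh : H'₀ - (ω : ℂ) • (Ac * H'₀ * T) = C := hH'₀
    rw [sub_eq_iff_eq_add] at hh
    exact hh
  -- uniqueness of the affine solution
  have affine_unique : ∀ X Y : Matrix (Fin n) (Fin s) ℂ,
      X = C + (ω : ℂ) • (Ac * X * T) → Y = C + (ω : ℂ) • (Ac * Y * T) → X = Y := by
    intro X Y hX hY
    apply hLinj
    show X - (ω : ℂ) • (Ac * X * T) = Y - (ω : ℂ) • (Ac * Y * T)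
    rw [sub_eq_iff_eq_add.mpr (by rw [add_comm] at hX ⊢; exact hX),
      sub_eq_iff_eq_add.mpr (by rw [add_comm] at hY ⊢; exact hY)]
  -- stage equation ↔ affine equation for H*S⁻¹
  have key : ∀ H : Matrix (Fin n) (Fin s) ℂ,
      (H = (Matrix.of fun i (_ : Fin s) => h i) + (ω : ℂ) • (Ac * H * Λᵀ)) ↔
      H * S⁻¹ = C + (ω : ℂ) • (Ac * (H * S⁻¹) * T) := by
    intro H
    have hCh : (Matrix.of fun i (_ : Fin s) => h i) * S⁻¹ = C := by
      ext r i
      simp [Matrix.mul_apply, hC, hα, Matrix.vecMul, dotProduct, Finset.mul_sum, mul_comm]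
    have hTT : Ac * (H * S⁻¹) * T = Ac * H * Λᵀ * S⁻¹ := by
      rw [hT]
      calc Ac * (H * S⁻¹) * (S * Λᵀ * S⁻¹)
          = Ac * (H * S⁻¹ * S) * Λᵀ * S⁻¹ := by
            simp only [Matrix.mul_assoc]
        _ = Ac * H * Λᵀ * S⁻¹ := by
            rw [Matrix.nonsing_inv_mul_cancel_right _ _ hSd]
    constructor
    · intro hH
      rw [hTT]
      conv_lhs => rw [hH]
      rw [Matrix.add_mul, hCh, Matrix.smul_mul]
    · intro hH
      have h2 : H = (C + (ω : ℂ) • (Ac * (H * S⁻¹) * T)) * S := by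
        rw [← hH, Matrix.nonsing_inv_mul_cancel_right _ _ hSd]
      have h3 : (C + (ω : ℂ) • (Ac * (H * S⁻¹) * T)) * S
          = (Matrix.of fun i (_ : Fin s) => h i) + (ω : ℂ) • (Ac * H * Λᵀ) := by
        rw [Matrix.add_mul, Matrix.smul_mul, ← hCh,
          Matrix.nonsing_inv_mul_cancel_right _ _ hSd, hTT,
          Matrix.nonsing_inv_mul_cancel_right _ _ hSd]
      exact h2.trans h3
  constructor
  · refine ⟨H'₀, (chain_iff H'₀).mpr hH'₀eq, fun Y hY => ?_⟩
    exact affine_unique Y H'₀ ((chain_iff Y).mp hY) hH'₀eq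
  · intro H
    rw [key H]
    constructor
    · intro hH
      refine ⟨H * S⁻¹, (chain_iff _).mpr hH, ?_⟩
      rw [Matrix.nonsing_inv_mul_cancel_right _ _ hSd]
    · rintro ⟨H', hch, rfl⟩
      rw [Matrix.mul_nonsing_inv_cancel_right _ _ hSd]
      exact (chain_iff H').mp hch
end

section
/- Let A ∈ ℝ^{n×n}, B ∈ ℝ^{n×1}, C ∈ ℝ^{1×n}, and let V, W ∈ ℂ^{n×r} satisfy W^H V = I_r. Let s_0 ∈ ℂ be such that A − s_0 I_n is invertible, and suppose (A − s_0 I_n)^{-i} B lies in the column span of V for i = 1, ..., k. Define the reduced system Â = W^H A V, B̂ = W^H B, Ĉ = C V, and assume Â − s_0 I_r is invertible. Then the first k moments at s_0 coincide: C (A − s_0 I_n)^{-(j+1)} B = Ĉ (Â − s_0 I_r)^{-(j+1)} B̂ for j = 0, ..., k−1. -/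
open Matrix

/-- One-sided rational interpolation: if `(A − s₀I)⁻ⁱB ∈ span(V)` for `i = 1, …, k`,
then the first `k` moments at `s₀` of the original and the reduced system coincide. -/
theorem moment_matching_one_sided
    {n r k : ℕ} (A : Matrix (Fin n) (Fin n) ℝ) (B : Matrix (Fin n) (Fin 1) ℝ)
    (C : Matrix (Fin 1) (Fin n) ℝ)
    (Ac : Matrix (Fin n) (Fin n) ℂ) (hAc : Ac = A.map (Complex.ofReal : ℝ → ℂ))
    (Bc : Matrix (Fin n) (Fin 1) ℂ) (hBc : Bc = B.map (Complex.ofReal : ℝ → ℂ))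
    (Cc : Matrix (Fin 1) (Fin n) ℂ) (hCc : Cc = C.map (Complex.ofReal : ℝ → ℂ))
    (V W : Matrix (Fin n) (Fin r) ℂ) (hWV : Wᴴ * V = 1)
    (s₀ : ℂ) (hinv : IsUnit (Ac - s₀ • 1))
    (hspan : ∀ i : ℕ, 1 ≤ i → i ≤ k →
      (fun row => (((Ac - s₀ • 1)⁻¹) ^ i * Bc) row 0) ∈
        Submodule.span ℂ (Set.range Vᵀ))
    (Ar : Matrix (Fin r) (Fin r) ℂ) (hAr : Ar = Wᴴ * Ac * V)
    (Br : Matrix (Fin r) (Fin 1) ℂ) (hBr : Br = Wᴴ * Bc)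
    (Cr : Matrix (Fin 1) (Fin r) ℂ) (hCr : Cr = Cc * V)
    (hinvr : IsUnit (Ar - s₀ • 1)) :
    ∀ j : ℕ, j < k →
      Cc * ((Ac - s₀ • 1)⁻¹) ^ (j + 1) * Bc =
        Cr * ((Ar - s₀ • 1)⁻¹) ^ (j + 1) * Br := by
  set M := (Ac - s₀ • 1)⁻¹ with hM
  set Mr := (Ar - s₀ • 1)⁻¹ with hMr
  have hdet : IsUnit (Ac - s₀ • (1 : Matrix (Fin n) (Fin n) ℂ)).det :=
    (Matrix.isUnit_iff_isUnit_det _).mp hinv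
  have hdetr : IsUnit (Ar - s₀ • (1 : Matrix (Fin r) (Fin r) ℂ)).det :=
    (Matrix.isUnit_iff_isUnit_det _).mp hinvr
  have hMl : (Ac - s₀ • 1) * M = 1 := Matrix.mul_nonsing_inv _ hdet
  have hMrl : Mr * (Ar - s₀ • 1) = 1 := Matrix.nonsing_inv_mul _ hdetr
  have hred : Wᴴ * (Ac - s₀ • 1) * V = Ar - s₀ • 1 := by
    rw [hAr, Matrix.mul_sub, Matrix.sub_mul]
    congr 1
    rw [Matrix.mul_smul, Matrix.smul_mul, Matrix.mul_one, hWV]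
  have key : ∀ i : ℕ, 1 ≤ i → i ≤ k → M ^ i * Bc = V * (Mr ^ i * Br) := by
    intro i
    induction i with
    | zero => omega
    | succ i ih =>
      intro _ hik
      -- get the coefficients
      obtain ⟨c, hc⟩ := (Submodule.mem_span_range_iff_exists_fun ℂ).mp
        (hspan (i + 1) (by omega) hik)
      set X : Matrix (Fin r) (Fin 1) ℂ := Matrix.of (fun p _ => c p) with hX
      have hVX : M ^ (i + 1) * Bc = V * X := by
        ext row q
        have hq : q = 0 := Subsingleton.elim _ _
        subst hq
        have := congrFun hc row
        simp only [Finset.sum_apply, Pi.smul_apply, Matrix.transpose_apply,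
          smul_eq_mul] at this
        rw [← this]
        simp [Matrix.mul_apply, hX, mul_comm]
      have hWMi : Wᴴ * (M ^ i * Bc) = Mr ^ i * Br := by
        rcases Nat.eq_zero_or_pos i with h0 | hpos
        · subst h0; simp [hBr]
        · rw [ih hpos (by omega), ← Matrix.mul_assoc, hWV, Matrix.one_mul]
      have hArX : (Ar - s₀ • 1) * X = Mr ^ i * Br := by
        have h1 : (Ac - s₀ • 1) * (M ^ (i + 1) * Bc) = M ^ i * Bc := by
          rw [pow_succ']
          rw [← Matrix.mul_assoc, ← Matrix.mul_assoc, hMl, Matrix.one_mul]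
        calc (Ar - s₀ • 1) * X = Wᴴ * (Ac - s₀ • 1) * V * X := by rw [hred]
          _ = Wᴴ * ((Ac - s₀ • 1) * (M ^ (i + 1) * Bc)) := by
              rw [Matrix.mul_assoc, ← hVX, Matrix.mul_assoc]
          _ = Mr ^ i * Br := by rw [h1, hWMi]
      have hXeq : X = Mr ^ (i + 1) * Br := by
        calc X = Mr * ((Ar - s₀ • 1) * X) := by
              rw [← Matrix.mul_assoc, hMrl, Matrix.one_mul]
          _ = Mr ^ (i + 1) * Br := by
              rw [hArX, pow_succ', Matrix.mul_assoc]
      rw [hVX, hXeq]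
  intro j hj
  have h := key (j + 1) (by omega) (by omega)
  rw [Matrix.mul_assoc, h, hCr]
  simp only [Matrix.mul_assoc]
end

section
/- Let A ∈ ℝ^{n×n}, B ∈ ℝ^{n×1}, C ∈ ℝ^{1×n}, and let V, W ∈ ℂ^{n×r} satisfy W^H V = I_r. Let s_0 ∈ ℂ be such that A − s_0 I_n is invertible. Suppose (A − s_0 I_n)^{-i} B lies in the column span of V for i = 1, ..., k, and (A^T − conj(s_0) I_n)^{-i} C^T lies in the column span of W for i = 1, ..., k. Define Â = W^H A V, B̂ = W^H B, Ĉ = C V, and assume Â − s_0 I_r is invertible. Then the first 2k moments at s_0 coincide: C (A − s_0 I_n)^{-(j+1)} B = Ĉ (Â − s_0 I_r)^{-(j+1)} B̂ for j = 0, ..., 2k−1. -/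
open Matrix

private lemma col_factor {n r : ℕ} (V : Matrix (Fin n) (Fin r) ℂ)
    (b : Matrix (Fin n) (Fin 1) ℂ)
    (h : (fun row => b row 0) ∈ Submodule.span ℂ (Set.range Vᵀ)) :
    ∃ X : Matrix (Fin r) (Fin 1) ℂ, b = V * X := by
  replace h := (Submodule.mem_span_range_iff_exists_fun ℂ).mp h
  obtain ⟨c, hc⟩ := h
  refine ⟨Matrix.of fun i _ => c i, ?_⟩
  ext row o
  have h1 := congrFun hc row
  simp only [Finset.sum_apply, Pi.smul_apply, Matrix.transpose_apply, smul_eq_mul] at h1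
  fin_cases o
  simp [Matrix.mul_apply, ← h1, mul_comm]

/-- Two-sided rational interpolation: if `(A − s₀I)⁻ⁱB ∈ span(V)` and
`(Aᵀ − conj(s₀)I)⁻ⁱCᵀ ∈ span(W)` for `i = 1, …, k`, then the first `2k` moments at
`s₀` of the original and the reduced system coincide. -/
theorem moment_matching_two_sided
    {n r k : ℕ} (A : Matrix (Fin n) (Fin n) ℝ) (B : Matrix (Fin n) (Fin 1) ℝ)
    (C : Matrix (Fin 1) (Fin n) ℝ)
    (Ac : Matrix (Fin n) (Fin n) ℂ) (hAc : Ac = A.map (Complex.ofReal : ℝ → ℂ))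
    (Bc : Matrix (Fin n) (Fin 1) ℂ) (hBc : Bc = B.map (Complex.ofReal : ℝ → ℂ))
    (Cc : Matrix (Fin 1) (Fin n) ℂ) (hCc : Cc = C.map (Complex.ofReal : ℝ → ℂ))
    (V W : Matrix (Fin n) (Fin r) ℂ) (hWV : Wᴴ * V = 1)
    (s₀ : ℂ) (hinv : IsUnit (Ac - s₀ • 1))
    (hspanV : ∀ i : ℕ, 1 ≤ i → i ≤ k →
      (fun row => (((Ac - s₀ • 1)⁻¹) ^ i * Bc) row 0) ∈
        Submodule.span ℂ (Set.range Vᵀ))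
    (hspanW : ∀ i : ℕ, 1 ≤ i → i ≤ k →
      (fun row => (((Acᵀ - (starRingEnd ℂ s₀) • 1)⁻¹) ^ i * Ccᵀ) row 0) ∈
        Submodule.span ℂ (Set.range Wᵀ))
    (Ar : Matrix (Fin r) (Fin r) ℂ) (hAr : Ar = Wᴴ * Ac * V)
    (Br : Matrix (Fin r) (Fin 1) ℂ) (hBr : Br = Wᴴ * Bc)
    (Cr : Matrix (Fin 1) (Fin r) ℂ) (hCr : Cr = Cc * V)
    (hinvr : IsUnit (Ar - s₀ • 1)) :
    ∀ j : ℕ, j < 2 * k →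
      Cc * ((Ac - s₀ • 1)⁻¹) ^ (j + 1) * Bc =
        Cr * ((Ar - s₀ • 1)⁻¹) ^ (j + 1) * Br := by
  set E : Matrix (Fin n) (Fin n) ℂ := Ac - s₀ • 1 with hEdef
  set Er : Matrix (Fin r) (Fin r) ℂ := Ar - s₀ • 1 with hErdef
  have hdet : IsUnit E.det := (Matrix.isUnit_iff_isUnit_det E).mp hinv
  have hdetr : IsUnit Er.det := (Matrix.isUnit_iff_isUnit_det Er).mp hinvr
  have hEG : E * E⁻¹ = 1 := Matrix.mul_nonsing_inv E hdet
  have hGE : E⁻¹ * E = 1 := Matrix.nonsing_inv_mul E hdet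
  have hErG : Er * Er⁻¹ = 1 := Matrix.mul_nonsing_inv Er hdetr
  have hGEr : Er⁻¹ * Er = 1 := Matrix.nonsing_inv_mul Er hdetr
  have hAcH : Acᴴ = Acᵀ := by
    ext i j
    simp [hAc, Matrix.conjTranspose_apply, Matrix.map_apply]
  have hCcH : Ccᴴ = Ccᵀ := by
    ext i j
    simp [hCc, Matrix.conjTranspose_apply, Matrix.map_apply]
  have hEH : Eᴴ = Acᵀ - (starRingEnd ℂ s₀) • 1 := by
    rw [hEdef, Matrix.conjTranspose_sub, Matrix.conjTranspose_smul,
      Matrix.conjTranspose_one, hAcH, starRingEnd_apply]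
  have hErWEV : Er = Wᴴ * E * V := by
    rw [hErdef, hEdef, hAr]
    simp [Matrix.mul_sub, Matrix.sub_mul, Matrix.mul_smul, Matrix.smul_mul, hWV]
  have hVfac : ∀ i, 1 ≤ i → i ≤ k → E⁻¹ ^ i * Bc = V * (Wᴴ * (E⁻¹ ^ i * Bc)) := by
    intro i h1 h2
    obtain ⟨X, hX⟩ := col_factor V _ (hspanV i h1 h2)
    rw [hX, ← Matrix.mul_assoc Wᴴ V X, hWV, Matrix.one_mul]
  have hWfac : ∀ i, 1 ≤ i → i ≤ k → Cc * E⁻¹ ^ i = (Cc * E⁻¹ ^ i * V) * Wᴴ := by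
    intro i h1 h2
    obtain ⟨Y, hY⟩ := col_factor W _ (hspanW i h1 h2)
    have hM : ((Acᵀ - (starRingEnd ℂ s₀) • 1)⁻¹) ^ i * Ccᵀ = (Cc * E⁻¹ ^ i)ᴴ := by
      rw [← hEH, ← hCcH, Matrix.conjTranspose_mul, Matrix.conjTranspose_pow,
        Matrix.conjTranspose_nonsing_inv]
    have hfac : Cc * E⁻¹ ^ i = Yᴴ * Wᴴ := by
      have h3 : (Cc * E⁻¹ ^ i)ᴴ = W * Y := hM.symm.trans hY
      calc Cc * E⁻¹ ^ i = ((Cc * E⁻¹ ^ i)ᴴ)ᴴ := (Matrix.conjTranspose_conjTranspose _).symm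
        _ = (W * Y)ᴴ := by rw [h3]
        _ = Yᴴ * Wᴴ := Matrix.conjTranspose_mul _ _
    rw [hfac, Matrix.mul_assoc Yᴴ Wᴴ V, hWV, Matrix.mul_one]
  have QB : ∀ m, m ≤ k → Wᴴ * (E⁻¹ ^ m * Bc) = Er⁻¹ ^ m * Br := by
    intro m
    induction m with
    | zero => intro _; simp [hBr]
    | succ m ih =>
      intro hm
      have ihm := ih (Nat.le_of_succ_le hm)
      have hfac := hVfac (m + 1) (Nat.succ_le_succ (Nat.zero_le m)) hm
      have key : Er * (Wᴴ * (E⁻¹ ^ (m + 1) * Bc)) = Er⁻¹ ^ m * Br := by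
        calc Er * (Wᴴ * (E⁻¹ ^ (m + 1) * Bc))
            = Wᴴ * E * (V * (Wᴴ * (E⁻¹ ^ (m + 1) * Bc))) := by
              rw [hErWEV, Matrix.mul_assoc]
          _ = Wᴴ * E * (E⁻¹ ^ (m + 1) * Bc) := by rw [← hfac]
          _ = Wᴴ * (E⁻¹ ^ m * Bc) := by
              simp only [pow_succ', Matrix.mul_assoc]
              rw [← Matrix.mul_assoc E E⁻¹, hEG, Matrix.one_mul]
          _ = Er⁻¹ ^ m * Br := ihm
      calc Wᴴ * (E⁻¹ ^ (m + 1) * Bc)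
          = Er⁻¹ * (Er * (Wᴴ * (E⁻¹ ^ (m + 1) * Bc))) := by
            rw [← Matrix.mul_assoc Er⁻¹ Er, hGEr, Matrix.one_mul]
        _ = Er⁻¹ * (Er⁻¹ ^ m * Br) := by rw [key]
        _ = Er⁻¹ ^ (m + 1) * Br := by rw [pow_succ', Matrix.mul_assoc]
  have QC : ∀ m, m ≤ k → Cc * E⁻¹ ^ m * V = Cr * Er⁻¹ ^ m := by
    intro m
    induction m with
    | zero => intro _; simp [hCr]
    | succ m ih =>
      intro hm
      have ihm := ih (Nat.le_of_succ_le hm)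
      have hfac := hWfac (m + 1) (Nat.succ_le_succ (Nat.zero_le m)) hm
      have key : (Cc * E⁻¹ ^ (m + 1) * V) * Er = Cr * Er⁻¹ ^ m := by
        calc (Cc * E⁻¹ ^ (m + 1) * V) * Er
            = (Cc * E⁻¹ ^ (m + 1) * V) * (Wᴴ * E * V) := by rw [hErWEV]
          _ = ((Cc * E⁻¹ ^ (m + 1) * V) * Wᴴ) * (E * V) := by
              simp only [Matrix.mul_assoc]
          _ = Cc * E⁻¹ ^ (m + 1) * (E * V) := by rw [← hfac]
          _ = Cc * E⁻¹ ^ m * V := by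
              simp only [pow_succ, Matrix.mul_assoc]
              rw [← Matrix.mul_assoc E⁻¹ E V, hGE, Matrix.one_mul]
          _ = Cr * Er⁻¹ ^ m := ihm
      calc Cc * E⁻¹ ^ (m + 1) * V
          = ((Cc * E⁻¹ ^ (m + 1) * V) * Er) * Er⁻¹ := by
            rw [Matrix.mul_assoc (Cc * E⁻¹ ^ (m + 1) * V) Er Er⁻¹, hErG, Matrix.mul_one]
        _ = Cr * Er⁻¹ ^ m * Er⁻¹ := by rw [key]
        _ = Cr * Er⁻¹ ^ (m + 1) := by rw [pow_succ, Matrix.mul_assoc]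
  intro j hj
  by_cases hcase : j + 1 ≤ k
  · have h1 : 1 ≤ j + 1 := Nat.succ_le_succ (Nat.zero_le j)
    have hfac := hVfac (j + 1) h1 hcase
    have hq := QB (j + 1) hcase
    simp only [Matrix.mul_assoc]
    rw [hfac, hq, hCr, Matrix.mul_assoc]
  · push_neg at hcase
    have hq1 : 1 ≤ j + 1 - k := by omega
    have hqk : j + 1 - k ≤ k := by omega
    have hk1 : 1 ≤ k := by omega
    have hsum : (j + 1 - k) + k = j + 1 := by omega
    have hfacB := hVfac k hk1 le_rfl
    have hQB := QB k le_rfl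
    have hfacC := hWfac (j + 1 - k) hq1 hqk
    have hQC := QC (j + 1 - k) hqk
    have hpow : E⁻¹ ^ (j + 1) = E⁻¹ ^ (j + 1 - k) * E⁻¹ ^ k := by rw [← pow_add, hsum]
    have hpowr : Er⁻¹ ^ (j + 1 - k) * (Er⁻¹ ^ k * Br) = Er⁻¹ ^ (j + 1) * Br := by
      rw [← Matrix.mul_assoc, ← pow_add, hsum]
    calc Cc * E⁻¹ ^ (j + 1) * Bc
        = (Cc * E⁻¹ ^ (j + 1 - k)) * (E⁻¹ ^ k * Bc) := by
          rw [hpow]; simp only [Matrix.mul_assoc]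
      _ = ((Cc * E⁻¹ ^ (j + 1 - k) * V) * Wᴴ) * (V * (Wᴴ * (E⁻¹ ^ k * Bc))) := by
          rw [← hfacC, ← hfacB]
      _ = ((Cr * Er⁻¹ ^ (j + 1 - k)) * Wᴴ) * (V * (Er⁻¹ ^ k * Br)) := by rw [hQC, hQB]
      _ = Cr * Er⁻¹ ^ (j + 1) * Br := by
          simp only [Matrix.mul_assoc]
          rw [← Matrix.mul_assoc Wᴴ V, hWV, Matrix.one_mul, hpowr]
end

section
/- Let A ∈ ℝ^{n×n}, B ∈ ℝ^{n×1}, C ∈ ℝ^{1×n}, and let V, W ∈ ℂ^{n×r} satisfy W^H V = I_r. Suppose A^i B lies in the column span of V for i = 0, ..., k−1. Define Â = W^H A V, B̂ = W^H B, Ĉ = C V. Then the first k Markov parameters coincide: C A^{j-1} B = Ĉ Â^{j-1} B̂ for j = 1, ..., k. -/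
open Matrix

/-- One-sided interpolation at `∞`: if `AⁱB ∈ span(V)` for `i = 0, …, k−1`, then the
first `k` Markov parameters of the original and the reduced system coincide. -/
theorem markov_matching_one_sided
    {n r k : ℕ} (A : Matrix (Fin n) (Fin n) ℝ) (B : Matrix (Fin n) (Fin 1) ℝ)
    (C : Matrix (Fin 1) (Fin n) ℝ)
    (Ac : Matrix (Fin n) (Fin n) ℂ) (hAc : Ac = A.map (Complex.ofReal : ℝ → ℂ))
    (Bc : Matrix (Fin n) (Fin 1) ℂ) (hBc : Bc = B.map (Complex.ofReal : ℝ → ℂ))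
    (Cc : Matrix (Fin 1) (Fin n) ℂ) (hCc : Cc = C.map (Complex.ofReal : ℝ → ℂ))
    (V W : Matrix (Fin n) (Fin r) ℂ) (hWV : Wᴴ * V = 1)
    (hspan : ∀ i : ℕ, i < k →
      (fun row => (Ac ^ i * Bc) row 0) ∈ Submodule.span ℂ (Set.range Vᵀ))
    (Ar : Matrix (Fin r) (Fin r) ℂ) (hAr : Ar = Wᴴ * Ac * V)
    (Br : Matrix (Fin r) (Fin 1) ℂ) (hBr : Br = Wᴴ * Bc)
    (Cr : Matrix (Fin 1) (Fin r) ℂ) (hCr : Cr = Cc * V) :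
    ∀ j : ℕ, 1 ≤ j → j ≤ k →
      Cc * Ac ^ (j - 1) * Bc = Cr * Ar ^ (j - 1) * Br := by
  -- Key: for i < k, V * (Wᴴ * (Ac^i * Bc)) = Ac^i * Bc
  have key : ∀ i : ℕ, i < k → V * (Wᴴ * (Ac ^ i * Bc)) = Ac ^ i * Bc := by
    intro i hi
    obtain ⟨c, hc⟩ := Submodule.mem_span_range_iff_exists_fun ℂ |>.mp (hspan i hi)
    have hrep : Ac ^ i * Bc = V * Matrix.of (fun (j : Fin r) (_ : Fin 1) => c j) := by
      ext x y
      have : y = 0 := Subsingleton.elim y 0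
      subst this
      have := congrFun hc x
      simp [Matrix.mul_apply] at this ⊢
      rw [← this]
      simp [Matrix.transpose_apply, mul_comm]
    rw [hrep, ← Matrix.mul_assoc Wᴴ V, hWV, Matrix.one_mul]
  have red : ∀ i : ℕ, i < k → Ar ^ i * Br = Wᴴ * (Ac ^ i * Bc) := by
    intro i
    induction i with
    | zero => intro _; simp [hBr]
    | succ m ih =>
      intro hm
      have hmk : m < k := Nat.lt_of_succ_lt hm
      rw [pow_succ', Matrix.mul_assoc, ih hmk, hAr, pow_succ']
      rw [Matrix.mul_assoc (Wᴴ * Ac) V, key m hmk, Matrix.mul_assoc Wᴴ Ac,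
        Matrix.mul_assoc Ac]
  intro j hj1 hjk
  have hik : j - 1 < k := Nat.lt_of_lt_of_le (Nat.sub_lt hj1 one_pos) hjk
  rw [Matrix.mul_assoc Cc, hCr, Matrix.mul_assoc (Cc * V), red _ hik, Matrix.mul_assoc Cc V, key _ hik]
end

section
/- Let A ∈ ℝ^{n×n}, B ∈ ℝ^{n×1}, C ∈ ℝ^{1×n}, and let V, W ∈ ℂ^{n×r} satisfy W^H V = I_r. Suppose A^i B lies in the column span of V for i = 0, ..., k−1, and (A^T)^i C^T lies in the column span of W for i = 0, ..., k−1. Define Â = W^H A V, B̂ = W^H B, Ĉ = C V. Then the first 2k Markov parameters coincide: C A^{j-1} B = Ĉ Â^{j-1} B̂ for j = 1, ..., 2k. -/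
open Matrix

/-- Two-sided interpolation at `∞`: if `AⁱB ∈ span(V)` and `(Aᵀ)ⁱCᵀ ∈ span(W)` for
`i = 0, …, k−1`, then the first `2k` Markov parameters of the original and the
reduced system coincide. -/
theorem markov_matching_two_sided
    {n r k : ℕ} (A : Matrix (Fin n) (Fin n) ℝ) (B : Matrix (Fin n) (Fin 1) ℝ)
    (C : Matrix (Fin 1) (Fin n) ℝ)
    (Ac : Matrix (Fin n) (Fin n) ℂ) (hAc : Ac = A.map (Complex.ofReal : ℝ → ℂ))
    (Bc : Matrix (Fin n) (Fin 1) ℂ) (hBc : Bc = B.map (Complex.ofReal : ℝ → ℂ))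
    (Cc : Matrix (Fin 1) (Fin n) ℂ) (hCc : Cc = C.map (Complex.ofReal : ℝ → ℂ))
    (V W : Matrix (Fin n) (Fin r) ℂ) (hWV : Wᴴ * V = 1)
    (hspanV : ∀ i : ℕ, i < k →
      (fun row => (Ac ^ i * Bc) row 0) ∈ Submodule.span ℂ (Set.range Vᵀ))
    (hspanW : ∀ i : ℕ, i < k →
      (fun row => ((Acᵀ) ^ i * Ccᵀ) row 0) ∈ Submodule.span ℂ (Set.range Wᵀ))
    (Ar : Matrix (Fin r) (Fin r) ℂ) (hAr : Ar = Wᴴ * Ac * V)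
    (Br : Matrix (Fin r) (Fin 1) ℂ) (hBr : Br = Wᴴ * Bc)
    (Cr : Matrix (Fin 1) (Fin r) ℂ) (hCr : Cr = Cc * V) :
    ∀ j : ℕ, 1 ≤ j → j ≤ 2 * k →
      Cc * Ac ^ (j - 1) * Bc = Cr * Ar ^ (j - 1) * Br := by
  have hmap : ∀ {a b c : ℕ} (M : Matrix (Fin a) (Fin b) ℝ) (N : Matrix (Fin b) (Fin c) ℝ),
      (M * N).map (Complex.ofReal : ℝ → ℂ) =
        M.map Complex.ofReal * N.map Complex.ofReal := by
    intro a b c M N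
    ext i j
    simp [Matrix.mul_apply, Matrix.map_apply]
  have hV : ∀ i : ℕ, i < k → ∃ X : Matrix (Fin r) (Fin 1) ℂ, V * X = Ac ^ i * Bc := by
    intro i hi
    obtain ⟨c, hc⟩ := (Submodule.mem_span_range_iff_exists_fun ℂ).mp (hspanV i hi)
    refine ⟨Matrix.of (fun j _ => c j), ?_⟩
    ext row col
    have := congrFun hc row
    simp [Matrix.mul_apply, Matrix.transpose_apply, Subsingleton.elim col 0] at this ⊢
    rw [← this]
    exact Finset.sum_congr rfl (fun j _ => mul_comm _ _)
  have hW : ∀ i : ℕ, i < k → ∃ Y : Matrix (Fin r) (Fin 1) ℂ, W * Y = (Acᵀ) ^ i * Ccᵀ := by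
    intro i hi
    obtain ⟨c, hc⟩ := (Submodule.mem_span_range_iff_exists_fun ℂ).mp (hspanW i hi)
    refine ⟨Matrix.of (fun j _ => c j), ?_⟩
    ext row col
    have := congrFun hc row
    simp [Matrix.mul_apply, Matrix.transpose_apply, Subsingleton.elim col 0] at this ⊢
    rw [← this]
    exact Finset.sum_congr rfl (fun j _ => mul_comm _ _)
  have hPV : ∀ i : ℕ, i < k → V * (Wᴴ * (Ac ^ i * Bc)) = Ac ^ i * Bc := by
    intro i hi
    obtain ⟨X, hX⟩ := hV i hi
    rw [← hX, ← Matrix.mul_assoc Wᴴ V X, hWV, Matrix.one_mul]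
  have hreal : ∀ i : ℕ, Cc * Ac ^ i = (C * A ^ i).map (Complex.ofReal : ℝ → ℂ) := by
    intro i
    have hA : Ac ^ i = (A ^ i).map (Complex.ofReal : ℝ → ℂ) := by
      induction i with
      | zero => simp [pow_zero, Matrix.map_one]
      | succ m ih => rw [pow_succ, pow_succ, ih, hAc, ← hmap]
    rw [hA, hCc, ← hmap]
  have hPW : ∀ i : ℕ, i < k → Cc * Ac ^ i * V * Wᴴ = Cc * Ac ^ i := by
    intro i hi
    obtain ⟨Y, hY⟩ := hW i hi
    have hD : Cc * Ac ^ i = (Yᵀ.map (starRingEnd ℂ)) * Wᴴ := by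
      have h1 : Cc * Ac ^ i = Yᵀ * Wᵀ := by
        have := congrArg Matrix.transpose hY
        rw [Matrix.transpose_mul, Matrix.transpose_mul, Matrix.transpose_transpose,
          Matrix.transpose_pow, Matrix.transpose_transpose] at this
        exact this.symm
      have h2 : (Cc * Ac ^ i).map (starRingEnd ℂ) = Cc * Ac ^ i := by
        rw [hreal i, Matrix.map_map]
        congr 1
        ext x
        exact Complex.conj_ofReal _
      calc Cc * Ac ^ i = (Cc * Ac ^ i).map (starRingEnd ℂ) := h2.symm
        _ = (Yᵀ * Wᵀ).map (starRingEnd ℂ) := by rw [h1]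
        _ = (Yᵀ.map (starRingEnd ℂ)) * (Wᵀ.map (starRingEnd ℂ)) := by
            ext a b; simp [Matrix.mul_apply, Matrix.map_apply]
        _ = (Yᵀ.map (starRingEnd ℂ)) * Wᴴ := rfl
    rw [hD, Matrix.mul_assoc (Yᵀ.map (starRingEnd ℂ)) Wᴴ V, hWV, Matrix.mul_one]
  have hR : ∀ i : ℕ, i ≤ k → Ar ^ i * Br = Wᴴ * (Ac ^ i * Bc) := by
    intro i hi
    induction i with
    | zero => simp [hBr]
    | succ m ih =>
      have hm : m < k := hi
      rw [pow_succ' Ar m, Matrix.mul_assoc Ar, ih hm.le, hAr,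
        Matrix.mul_assoc (Wᴴ * Ac) V, hPV m hm, Matrix.mul_assoc Wᴴ Ac,
        pow_succ' Ac m, Matrix.mul_assoc Ac]
  have hL : ∀ i : ℕ, i ≤ k → Cr * Ar ^ i = Cc * Ac ^ i * V := by
    intro i hi
    induction i with
    | zero => simp [hCr]
    | succ m ih =>
      have hm : m < k := hi
      rw [pow_succ Ar m, ← Matrix.mul_assoc Cr, ih hm.le, hAr,
        ← Matrix.mul_assoc (Cc * Ac ^ m * V), ← Matrix.mul_assoc (Cc * Ac ^ m * V) Wᴴ Ac,
        hPW m hm, Matrix.mul_assoc Cc (Ac ^ m) Ac, ← pow_succ Ac m]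
  intro j hj1 hj2
  have hk1 : 1 ≤ k := by omega
  set m := j - 1 with hm
  set p := min m k with hp
  set q := m - p with hq
  have hpk : p ≤ k := min_le_right _ _
  have hqk : q < k := by omega
  have hpq : p + q = m := by omega
  calc Cc * Ac ^ m * Bc = Cc * Ac ^ p * (Ac ^ q * Bc) := by
        rw [← hpq, pow_add, ← Matrix.mul_assoc Cc (Ac ^ p) (Ac ^ q),
          Matrix.mul_assoc (Cc * Ac ^ p) (Ac ^ q) Bc]
    _ = Cc * Ac ^ p * (V * (Wᴴ * (Ac ^ q * Bc))) := by rw [hPV q hqk]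
    _ = (Cc * Ac ^ p * V) * (Wᴴ * (Ac ^ q * Bc)) := by
        rw [← Matrix.mul_assoc (Cc * Ac ^ p) V]
    _ = (Cr * Ar ^ p) * (Ar ^ q * Br) := by rw [hL p hpk, hR q hqk.le]
    _ = Cr * Ar ^ m * Br := by
        rw [← hpq, pow_add, ← Matrix.mul_assoc Cr (Ar ^ p) (Ar ^ q),
          Matrix.mul_assoc (Cr * Ar ^ p) (Ar ^ q) Br]
end
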